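/- Let M:(ℝ,≤)²→vect_F be a persistence module and let J₁ and J₂ be disjoint connected and convex subposets of (ℝ,≤)² such that M(i≤j) is an isomorphism for all i≤j in Jₖ (k=1,2). If there exist a ∈ J₁ and b ∈ J₂ with a ≤ b, then there exists a well-defined linear map φ_{J₁J₂}: lim_{J₁}M → lim_{J₂}M such that τ_b ∘ φ_{J₁J₂} = M(a≤b) ∘ σ_a, where σ and τ are the limit cones of M restricted to J₁ and J₂ respectively; moreover φ_{J₁J₂} does not depend on the choice of the comparable pair a ≤ b. -/

import Mathlib

/-- A persistence module over a preorder `P` with coefficients in a field `F`: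
a functor `(P,≤) → Vect_F`, given by vector spaces `V p` and linear maps
`map : i ≤ j → (V i →ₗ[F] V j)` satisfying the functoriality equations. -/
structure PersistenceModule (F : Type) [Field F] (P : Type) [Preorder P] where
  V : P → Type
  [addCommGroup : ∀ p, AddCommGroup (V p)]
  [module : ∀ p, Module F (V p)]
  map : ∀ {i j : P}, i ≤ j → (V i →ₗ[F] V j)
  map_id : ∀ i : P, map (le_refl i) = LinearMap.id
  map_comp : ∀ {i j k : P} (hij : i ≤ j) (hjk : j ≤ k),
    (map hjk).comp (map hij) = map (hij.trans hjk)

attribute [instance] PersistenceModule.addCommGroup PersistenceModule.module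

/-- A zigzag path `a - x₁ - ⋯ - xₙ - b` in a preorder, where each consecutive
pair of points is comparable. -/
inductive Zigzag (P : Type) [Preorder P] : P → P → Type
  | single (a : P) : Zigzag P a a
  | consLe {a b c : P} (h : a ≤ b) (p : Zigzag P b c) : Zigzag P a c
  | consGe {a b c : P} (h : b ≤ a) (p : Zigzag P b c) : Zigzag P a c

/-- Convexity of a subset of a poset: `i ≤ j ≤ k` with `i, k ∈ J` implies `j ∈ J`. -/
def PosetConvex {P : Type} [Preorder P] (J : Set P) : Prop :=
  ∀ i ∈ J, ∀ k ∈ J, ∀ j : P, i ≤ j → j ≤ k → j ∈ J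

/-- Connectedness: any two points of `J` are joined by a finite zigzag path inside `J`. -/
def ZigzagConnected {P : Type} [Preorder P] (J : Set P) : Prop :=
  ∀ a b : J, Nonempty (Zigzag (↥J) a b)

/-- Restriction of a persistence module to a subset of the parameter poset. -/
def PersistenceModule.restrict {F : Type} [Field F] {P : Type} [Preorder P]
    (M : PersistenceModule F P) (J : Set P) : PersistenceModule F ↥J where
  V i := M.V ↑i
  map {i j} h := M.map (show (i : P) ≤ (j : P) from h)
  map_id i := M.map_id ↑i
  map_comp _ _ := M.map_comp _ _

/-- `L` together with the legs `σ` is a limit cone over the persistence module `M`. -/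
def IsLimitCone {F : Type} [Field F] {P : Type} [Preorder P] (M : PersistenceModule F P)
    (L : Type) [AddCommGroup L] [Module F L] (σ : ∀ i : P, L →ₗ[F] M.V i) : Prop :=
  (∀ (i j : P) (h : i ≤ j), (M.map h).comp (σ i) = σ j) ∧
  ∀ (N : Type) [AddCommGroup N] [Module F N] (τ : ∀ i : P, N →ₗ[F] M.V i),
    (∀ (i j : P) (h : i ≤ j), (M.map h).comp (τ i) = τ j) →
    ∃! φ : N →ₗ[F] L, ∀ i : P, (σ i).comp φ = τ i


open Function

noncomputable section
namespace S8

variable {F : Type} [Field F]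

/-- A context: a convex set `J` on which all structure maps of `M` are isomorphisms. -/
structure Ctx (F : Type) [Field F] (M : PersistenceModule F (ℝ × ℝ)) where
  J : Set (ℝ × ℝ)
  conv : PosetConvex J
  iso : ∀ {x y : ℝ × ℝ}, x ∈ J → y ∈ J → ∀ h : x ≤ y, Function.Bijective (M.map h)

variable {M : PersistenceModule F (ℝ × ℝ)}

def Ctx.em (C : Ctx F M) {x y} (hx : x ∈ C.J) (hy : y ∈ C.J) (h : x ≤ y) :
    M.V x ≃ₗ[F] M.V y :=
  LinearEquiv.ofBijective (M.map h) (C.iso hx hy h)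

@[simp] theorem Ctx.em_apply (C : Ctx F M) {x y} (hx : x ∈ C.J) (hy : y ∈ C.J) (h : x ≤ y)
    (v : M.V x) : C.em hx hy h v = M.map h v := rfl

theorem map_map {x y z : ℝ × ℝ} (h₁ : x ≤ y) (h₂ : y ≤ z) (v : M.V x) :
    M.map h₂ (M.map h₁ v) = M.map (h₁.trans h₂) v :=
  LinearMap.congr_fun (M.map_comp h₁ h₂) v

@[simp] theorem map_refl_apply {x : ℝ × ℝ} (v : M.V x) : M.map (le_refl x) v = v := by
  rw [M.map_id]; rfl

theorem Ctx.em_trans (C : Ctx F M) {x y z} (hx : x ∈ C.J) (hy : y ∈ C.J) (hz : z ∈ C.J)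
    (h₁ : x ≤ y) (h₂ : y ≤ z) :
    (C.em hx hy h₁).trans (C.em hy hz h₂) = C.em hx hz (h₁.trans h₂) :=
  LinearEquiv.ext fun v => map_map h₁ h₂ v

theorem Ctx.em_refl (C : Ctx F M) {x} (hx : x ∈ C.J) (h : x ≤ x) :
    C.em hx hx h = LinearEquiv.refl F _ :=
  LinearEquiv.ext fun v => map_refl_apply v

/-- The one-step transport along a comparable pair, in either direction. -/
def Ctx.c (C : Ctx F M) {x y} (hx : x ∈ C.J) (hy : y ∈ C.J) (h : x ≤ y ∨ y ≤ x) :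
    M.V x ≃ₗ[F] M.V y :=
  if hxy : x ≤ y then C.em hx hy hxy else (C.em hy hx (h.resolve_left hxy)).symm

theorem Ctx.c_of_le (C : Ctx F M) {x y} (hx : x ∈ C.J) (hy : y ∈ C.J) (h : x ≤ y ∨ y ≤ x)
    (h' : x ≤ y) : C.c hx hy h = C.em hx hy h' := by
  unfold Ctx.c; rw [dif_pos h']

theorem Ctx.c_of_ge (C : Ctx F M) {x y} (hx : x ∈ C.J) (hy : y ∈ C.J) (h : x ≤ y ∨ y ≤ x)
    (h' : y ≤ x) : C.c hx hy h = (C.em hy hx h').symm := by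
  unfold Ctx.c
  by_cases hxy : x ≤ y
  · rw [dif_pos hxy]
    have : x = y := le_antisymm hxy h'
    subst this
    rw [C.em_refl]
    exact LinearEquiv.ext fun v => rfl
  · rw [dif_neg hxy]

theorem Ctx.c_congr (C : Ctx F M) {x y} (hx hx' : x ∈ C.J) (hy hy' : y ∈ C.J)
    (h h' : x ≤ y ∨ y ≤ x) : C.c hx hy h = C.c hx' hy' h' := rfl

/-- Paths with comparable consecutive points, inside `J`. -/
inductive Pth (J : Set (ℝ × ℝ)) : ℝ × ℝ → ℝ × ℝ → Type
  | nil (a) (ha : a ∈ J) : Pth J a a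
  | cons (a) {b c} (ha : a ∈ J) (hab : a ≤ b ∨ b ≤ a) (p : Pth J b c) : Pth J a c

namespace Pth

variable {J : Set (ℝ × ℝ)}

def headMem : ∀ {a b}, Pth J a b → a ∈ J
  | _, _, .nil _ ha => ha
  | _, _, .cons _ ha _ _ => ha

def lastMem : ∀ {a b}, Pth J a b → b ∈ J
  | _, _, .nil _ ha => ha
  | _, _, .cons _ _ _ p => p.lastMem

def pts : ∀ {a b}, Pth J a b → List (ℝ × ℝ)
  | _, _, .nil a _ => [a]
  | _, _, .cons a _ _ p => a :: p.pts

theorem head_mem_pts : ∀ {a b} (p : Pth J a b), a ∈ p.pts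
  | _, _, .nil a _ => List.mem_singleton.2 rfl
  | _, _, .cons a _ _ _ => List.mem_cons_self

theorem last_mem_pts : ∀ {a b} (p : Pth J a b), b ∈ p.pts
  | _, _, .nil a _ => List.mem_singleton.2 rfl
  | _, _, .cons _ _ _ p => List.mem_cons_of_mem _ p.last_mem_pts

theorem pts_mem : ∀ {a b} (p : Pth J a b), ∀ x ∈ p.pts, x ∈ J
  | _, _, .nil a ha => by simp [pts]; exact ha
  | _, _, .cons a ha _ p => by
      intro x hx
      rcases List.mem_cons.1 hx with h | h
      · exact h ▸ ha
      · exact p.pts_mem x h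

def app : ∀ {a b c}, Pth J a b → Pth J b c → Pth J a c
  | _, _, _, .nil _ _, q => q
  | _, _, _, .cons a ha hab p, q => .cons a ha hab (p.app q)

theorem app_pts : ∀ {a b c} (p : Pth J a b) (q : Pth J b c),
    ∀ x ∈ (p.app q).pts, x ∈ p.pts ∨ x ∈ q.pts
  | _, _, _, .nil _ _, q => fun x hx => Or.inr hx
  | _, _, _, .cons a ha hab p, q => by
      intro x hx
      rcases List.mem_cons.1 hx with h | h
      · exact Or.inl (h ▸ List.mem_cons_self)
      · rcases app_pts p q x h with h' | h'
        · exact Or.inl (List.mem_cons_of_mem _ h')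
        · exact Or.inr h'

def rev : ∀ {a b}, Pth J a b → Pth J b a
  | _, _, .nil a ha => .nil a ha
  | _, _, .cons a ha hab p => p.rev.app (.cons _ p.headMem (hab.symm) (.nil a ha))

theorem rev_pts {a b} (p : Pth J a b) : ∀ x ∈ p.rev.pts, x ∈ p.pts := by
  induction p with
  | nil a ha => intro x hx; exact hx
  | cons a ha hab p ih =>
    intro x hx
    rcases Pth.app_pts _ _ x hx with h | h
    · exact List.mem_cons_of_mem _ (ih x h)
    · rcases List.mem_cons.1 h with h' | h'
      · subst h'; exact List.mem_cons_of_mem _ p.head_mem_pts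
      · have hxa : x = a := by simpa [Pth.pts] using h'
        subst hxa; exact List.mem_cons_self

end Pth

/-- Transport along a path. -/
def Ctx.T (C : Ctx F M) : ∀ {a b}, Pth C.J a b → (M.V a ≃ₗ[F] M.V b)
  | _, _, .nil _ _ => LinearEquiv.refl F _
  | _, _, .cons _ ha hab p => (C.c ha p.headMem hab).trans (C.T p)

theorem Ctx.c_symm (C : Ctx F M) {x y} (hx : x ∈ C.J) (hy : y ∈ C.J) (h : x ≤ y ∨ y ≤ x) :
    C.c hy hx h.symm = (C.c hx hy h).symm := by
  rcases h with h' | h'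
  · rw [C.c_of_le hx hy _ h', C.c_of_ge hy hx _ h']
  · rw [C.c_of_ge hx hy _ h', C.c_of_le hy hx _ h', LinearEquiv.symm_symm]

theorem Ctx.T_cons (C : Ctx F M) {a b c} (ha : a ∈ C.J) (hab : a ≤ b ∨ b ≤ a)
    (p : Pth C.J b c) : C.T (.cons a ha hab p) = (C.c ha p.headMem hab).trans (C.T p) := rfl

theorem Ctx.T_app (C : Ctx F M) {a b c} (p : Pth C.J a b) (q : Pth C.J b c) :
    C.T (p.app q) = (C.T p).trans (C.T q) := by
  induction p with
  | nil a ha => exact LinearEquiv.ext fun v => rfl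
  | cons a ha hab p ih =>
    show (C.c ha (p.app q).headMem hab).trans (C.T (p.app q)) = _
    rw [ih]
    exact LinearEquiv.ext fun v => rfl

theorem Ctx.T_rev (C : Ctx F M) {a b} (p : Pth C.J a b) : C.T p.rev = (C.T p).symm := by
  induction p with
  | nil a ha => exact LinearEquiv.ext fun v => rfl
  | cons a ha hab p ih =>
    show C.T (p.rev.app (.cons _ p.headMem hab.symm (.nil a ha))) = _
    rw [C.T_app, ih]
    have h1 : C.T (Pth.cons _ p.headMem hab.symm (.nil a ha)) =
        (C.c ha p.headMem hab).symm := by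
      rw [Ctx.T_cons, ← C.c_symm ha p.headMem hab]
      exact LinearEquiv.ext fun v => rfl
    rw [h1]
    exact LinearEquiv.ext fun v => rfl

@[simp] theorem Ctx.em_symm_map (C : Ctx F M) {x y} (hx : x ∈ C.J) (hy : y ∈ C.J)
    (h h' : x ≤ y) (v : M.V x) : (C.em hx hy h).symm (M.map h' v) = v :=
  (C.em hx hy h).symm_apply_apply v

@[simp] theorem Ctx.map_em_symm (C : Ctx F M) {x y} (hx : x ∈ C.J) (hy : y ∈ C.J)
    (h h' : x ≤ y) (v : M.V y) : M.map h' ((C.em hx hy h).symm v) = v :=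
  (C.em hx hy h).apply_symm_apply v

theorem Ctx.em_split (C : Ctx F M) {x s y} (hx : x ∈ C.J) (hs : s ∈ C.J) (hy : y ∈ C.J)
    (hxy : x ≤ y) (hxs : x ≤ s) (hsy : s ≤ y) :
    C.em hx hy hxy = (C.em hx hs hxs).trans (C.em hs hy hsy) :=
  (C.em_trans hx hs hy hxs hsy).symm

theorem Ctx.contract (C : Ctx F M) {x y z} (hx : x ∈ C.J) (hy : y ∈ C.J) (hz : z ∈ C.J)
    (h₁ : x ≤ y ∨ y ≤ x) (h₂ : y ≤ z ∨ z ≤ y) (h₃ : x ≤ z ∨ z ≤ x) :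
    (C.c hx hy h₁).trans (C.c hy hz h₂) = C.c hx hz h₃ := by
  rcases h₁ with hxy | hyx
  · rcases h₂ with hyz | hzy
    · -- x ≤ y ≤ z
      have hxz : x ≤ z := hxy.trans hyz
      rw [C.c_of_le hx hy _ hxy, C.c_of_le hy hz _ hyz, C.c_of_le hx hz _ hxz,
        C.em_trans hx hy hz hxy hyz]
    · rcases h₃ with hxz | hzx
      · -- x ≤ y, z ≤ y, x ≤ z
        rw [C.c_of_le hx hy _ hxy, C.c_of_ge hy hz _ hzy, C.c_of_le hx hz _ hxz,
          C.em_split hx hz hy (hxz.trans hzy) hxz hzy]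
        exact LinearEquiv.ext fun v => by
          simp [LinearEquiv.trans_apply, LinearEquiv.symm_trans_apply]
      · -- x ≤ y, z ≤ y, z ≤ x
        rw [C.c_of_le hx hy _ hxy, C.c_of_ge hy hz _ hzy, C.c_of_ge hx hz _ hzx,
          C.em_split hz hx hy (hzx.trans hxy) hzx hxy]
        exact LinearEquiv.ext fun v => by
          simp [LinearEquiv.trans_apply, LinearEquiv.symm_trans_apply]
  · rcases h₂ with hyz | hzy
    · rcases h₃ with hxz | hzx
      · -- y ≤ x, y ≤ z, x ≤ z
        rw [C.c_of_ge hx hy _ hyx, C.c_of_le hy hz _ hyz, C.c_of_le hx hz _ hxz,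
          C.em_split hy hx hz (hyx.trans hxz) hyx hxz]
        exact LinearEquiv.ext fun v => by
          simp [LinearEquiv.trans_apply, LinearEquiv.symm_trans_apply]
      · -- y ≤ x, y ≤ z, z ≤ x
        rw [C.c_of_ge hx hy _ hyx, C.c_of_le hy hz _ hyz, C.c_of_ge hx hz _ hzx,
          C.em_split hy hz hx (hyz.trans hzx) hyz hzx]
        exact LinearEquiv.ext fun v => by
          simp [LinearEquiv.trans_apply, LinearEquiv.symm_trans_apply]
    · -- y ≤ x, z ≤ y  hence z ≤ x
      have hzx : z ≤ x := hzy.trans hyx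
      rw [C.c_of_ge hx hy _ hyx, C.c_of_ge hy hz _ hzy, C.c_of_ge hx hz _ hzx,
        C.em_split hz hy hx hzx hzy hyx]
      exact LinearEquiv.ext fun v => by
        simp [LinearEquiv.trans_apply, LinearEquiv.symm_trans_apply]

/-- Replacing a "peak" `y` over `x, z` by a lower peak `s` preserves transport. -/
theorem Ctx.stepUp (C : Ctx F M) {x y z s} (hx : x ∈ C.J) (hy : y ∈ C.J) (hz : z ∈ C.J)
    (hs : s ∈ C.J) (hxy : x ≤ y) (hzy : z ≤ y) (hxs : x ≤ s) (hzs : z ≤ s) (hsy : s ≤ y)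
    (o₁ : x ≤ y ∨ y ≤ x) (o₂ : y ≤ z ∨ z ≤ y) (o₃ : x ≤ s ∨ s ≤ x) (o₄ : s ≤ z ∨ z ≤ s) :
    (C.c hx hy o₁).trans (C.c hy hz o₂) = (C.c hx hs o₃).trans (C.c hs hz o₄) := by
  rw [C.c_of_le hx hy _ hxy, C.c_of_ge hy hz _ hzy, C.c_of_le hx hs _ hxs,
    C.c_of_ge hs hz _ hzs, C.em_split hx hs hy (hxs.trans hsy) hxs hsy,
    C.em_split hz hs hy (hzs.trans hsy) hzs hsy]
  exact LinearEquiv.ext fun v => by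
    simp [LinearEquiv.trans_apply, LinearEquiv.symm_trans_apply]

/-- Replacing a "valley" `y` under `x, z` by a higher valley `s` preserves transport. -/
theorem Ctx.stepDown (C : Ctx F M) {x y z s} (hx : x ∈ C.J) (hy : y ∈ C.J) (hz : z ∈ C.J)
    (hs : s ∈ C.J) (hyx : y ≤ x) (hyz : y ≤ z) (hsx : s ≤ x) (hsz : s ≤ z) (hys : y ≤ s)
    (o₁ : x ≤ y ∨ y ≤ x) (o₂ : y ≤ z ∨ z ≤ y) (o₃ : x ≤ s ∨ s ≤ x) (o₄ : s ≤ z ∨ z ≤ s) :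
    (C.c hx hy o₁).trans (C.c hy hz o₂) = (C.c hx hs o₃).trans (C.c hs hz o₄) := by
  rw [C.c_of_ge hx hy _ hyx, C.c_of_le hy hz _ hyz, C.c_of_ge hx hs _ hsx,
    C.c_of_le hs hz _ hsz, C.em_split hy hs hx (hys.trans hsx) hys hsx,
    C.em_split hy hs hz (hys.trans hsz) hys hsz]
  exact LinearEquiv.ext fun v => by
    simp [LinearEquiv.trans_apply, LinearEquiv.symm_trans_apply]

/-! ### The reduction machine -/

def UOK (Xs Ys : Finset ℝ) {J : Set (ℝ × ℝ)} {a b} (p : Pth J a b) : Prop :=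
  ∀ x ∈ p.pts, x.1 ∈ Xs ∧ x.2 ∈ Ys

structure Mode (Xs Ys : Finset ℝ) where
  le' : ℝ × ℝ → ℝ × ℝ → Prop
  trans' : ∀ {x y z}, le' x y → le' y z → le' x z
  tot : ∀ {x y : ℝ × ℝ}, x ≤ y ∨ y ≤ x → le' x y ∨ le' y x
  cmp' : ∀ {x y}, le' x y → x ≤ y ∨ y ≤ x
  betw : ∀ {u s z}, le' u s → le' s z → (u ≤ s ∧ s ≤ z) ∨ (z ≤ s ∧ s ≤ u)
  κ : ℝ × ℝ → ℝ
  κ_lt : ∀ {x y}, x ≤ y ∨ y ≤ x → κ x < κ y → le' x y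
  κ_mono : ∀ {x y}, le' x y → κ x ≤ κ y
  κ_eq : ∀ {x y : ℝ × ℝ}, κ x = κ y → x ≤ y ∨ y ≤ x
  jn : ℝ × ℝ → ℝ × ℝ → ℝ × ℝ
  jn_l : ∀ x y, le' x (jn x y)
  jn_r : ∀ x y, le' y (jn x y)
  jn_lub : ∀ {x y z}, le' x z → le' y z → le' (jn x y) z
  jn_κ : ∀ x y, κ (jn x y) = max (κ x) (κ y)
  jn_uX : ∀ {x y : ℝ × ℝ}, x.1 ∈ Xs → y.1 ∈ Xs → (jn x y).1 ∈ Xs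
  jn_uY : ∀ {x y : ℝ × ℝ}, x.2 ∈ Ys → y.2 ∈ Ys → (jn x y).2 ∈ Ys
  rk : ℝ × ℝ → ℕ
  rk_lt : ∀ {x y}, le' x y → x ≠ y → y.1 ∈ Xs → y.2 ∈ Ys → rk x < rk y

def Pth.mes {J : Set (ℝ × ℝ)} (rk : ℝ × ℝ → ℕ) : ∀ {a b}, Pth J a b → ℕ
  | _, _, .nil a _ => 1 + rk a
  | _, _, .cons a _ _ p => 1 + rk a + p.mes rk

theorem Pth.mes_pos {J : Set (ℝ × ℝ)} (rk : ℝ × ℝ → ℕ) {a b} (p : Pth J a b) :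
    1 ≤ p.mes rk := by
  cases p <;> simp [Pth.mes] <;> omega

variable {M : PersistenceModule F (ℝ × ℝ)}

theorem Ctx.T_cons2 (C : Ctx F M) {a b w d} (ha : a ∈ C.J) (hb : b ∈ C.J)
    (o₁ : a ≤ b ∨ b ≤ a) (o₂ : b ≤ w ∨ w ≤ b) (p : Pth C.J w d) :
    C.T (.cons a ha o₁ (.cons b hb o₂ p)) =
      ((C.c ha hb o₁).trans (C.c hb p.headMem o₂)).trans (C.T p) :=
  LinearEquiv.ext fun _ => rfl

section Machine

variable (C : Ctx F M) (Xs Ys : Finset ℝ) (md : Mode Xs Ys)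
variable (hstep : ∀ {x y z s} (hx : x ∈ C.J) (hy : y ∈ C.J) (hz : z ∈ C.J) (hs : s ∈ C.J),
    md.le' x y → md.le' z y → md.le' x s → md.le' z s → md.le' s y →
    ∀ (o₁ : x ≤ y ∨ y ≤ x) (o₂ : y ≤ z ∨ z ≤ y) (o₃ : x ≤ s ∨ s ≤ x) (o₄ : s ≤ z ∨ z ≤ s),
    (C.c hx hy o₁).trans (C.c hy hz o₂) = (C.c hx hs o₃).trans (C.c hs hz o₄))

include hstep in
theorem locate (cv : ℝ) {i j} (p : Pth C.J i j) :
    UOK Xs Ys p →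
    (∀ x ∈ p.pts, md.κ x ≤ cv) → (∃ x ∈ p.pts, md.κ x = cv) →
    md.κ i < cv → md.κ j < cv →
    ∃ q : Pth C.J i j, C.T q = C.T p ∧ q.mes md.rk < p.mes md.rk ∧ UOK Xs Ys q ∧
      (∀ S : Set (ℝ × ℝ), PosetConvex S → (∀ x ∈ p.pts, x ∈ S) → ∀ x ∈ q.pts, x ∈ S) := by
  induction p with
  | nil a ha =>
    intro _ _ hex hi _
    rcases hex with ⟨x, hx, hxc⟩
    simp [Pth.pts] at hx
    subst hx
    exact absurd hxc (ne_of_lt hi)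
  | cons a ha hab p ih =>
    intro hu hall hex hi hj
    rename_i b _
    by_cases hbc : md.κ b = cv
    · -- pattern at the head; the extremal point is b
      have hab' : md.le' a b := md.κ_lt hab (by rw [hbc]; exact hi)
      cases p with
      | nil _ hbJ => exact absurd hbc (ne_of_lt hj)
      | @cons _ w _ hbJ hbw p2 =>
        have hwJ : w ∈ C.J := p2.headMem
        have memb : b ∈ (Pth.cons a ha hab (Pth.cons b hbJ hbw p2)).pts :=
          List.mem_cons_of_mem _ (List.mem_cons_self)
        have memw : w ∈ (Pth.cons a ha hab (Pth.cons b hbJ hbw p2)).pts :=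
          List.mem_cons_of_mem _ (List.mem_cons_of_mem _ p2.head_mem_pts)
        have mema : a ∈ (Pth.cons a ha hab (Pth.cons b hbJ hbw p2)).pts :=
          List.mem_cons_self
        by_cases hwc : md.κ w = cv
        · rcases md.tot hbw with hzw | hwz
          · -- b ≤' w : contract (a, b, w)
            have haw : a ≤ w ∨ w ≤ a := md.cmp' (md.trans' hab' hzw)
            refine ⟨.cons a ha haw p2, ?_, ?_, ?_, ?_⟩
            · exact LinearEquiv.ext fun v => congrArg (fun t => C.T p2 t)
                (DFunLike.congr_fun (C.contract ha hbJ hwJ hab hbw haw) v).symm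
            · simp only [Pth.mes]; omega
            · intro x hx
              rcases List.mem_cons.1 hx with h | h
              · exact hu x (h ▸ mema)
              · exact hu x (List.mem_cons_of_mem _ (List.mem_cons_of_mem _ h))
            · intro S _ hS x hx
              rcases List.mem_cons.1 hx with h | h
              · exact hS x (h ▸ mema)
              · exact hS x (List.mem_cons_of_mem _ (List.mem_cons_of_mem _ h))
          · -- w ≤' b : contract (b, w, w') using the successor w' of w
            cases p2 with
            | nil _ hwJ2 => exact absurd hwc (ne_of_lt hj)
            | @cons _ w' _ hwJ2 hww' p3 =>
              have hw'J : w' ∈ C.J := p3.headMem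
              have memw' : w' ∈ (Pth.cons a ha hab (Pth.cons b hbJ hbw
                  (Pth.cons w hwJ2 hww' p3))).pts :=
                List.mem_cons_of_mem _ (List.mem_cons_of_mem _
                  (List.mem_cons_of_mem _ p3.head_mem_pts))
              have hbw' : b ≤ w' ∨ w' ≤ b := by
                by_cases hw'c : md.κ w' = cv
                · exact md.κ_eq (hbc.trans hw'c.symm)
                · have hw'lt : md.κ w' < cv := lt_of_le_of_ne (hall w' memw') hw'c
                  have hle : md.le' w' w := by
                    rcases md.tot hww' with h | h
                    · exact absurd (md.κ_mono h) (by rw [hwc]; exact not_le.2 hw'lt)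
                    · exact h
                  exact (md.cmp' (md.trans' hle hwz)).symm
              refine ⟨.cons a ha hab (.cons b hbJ hbw' p3), ?_, ?_, ?_, ?_⟩
              · exact LinearEquiv.ext fun v => congrArg (fun t => C.T p3 t)
                  (DFunLike.congr_fun (C.contract hbJ hwJ2 hw'J hbw hww' hbw')
                    ((C.c ha hbJ hab) v)).symm
              · simp only [Pth.mes]; omega
              · intro x hx
                rcases List.mem_cons.1 hx with h | h
                · exact hu x (h ▸ mema)
                · rcases List.mem_cons.1 h with h' | h'
                  · exact hu x (h' ▸ memb)
                  · exact hu x (List.mem_cons_of_mem _ (List.mem_cons_of_mem _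
                      (List.mem_cons_of_mem _ h')))
              · intro S _ hS x hx
                rcases List.mem_cons.1 hx with h | h
                · exact hS x (h ▸ mema)
                · rcases List.mem_cons.1 h with h' | h'
                  · exact hS x (h' ▸ memb)
                  · exact hS x (List.mem_cons_of_mem _ (List.mem_cons_of_mem _
                      (List.mem_cons_of_mem _ h')))
        · -- κ w < cv : replace the peak b by s := jn a w
          have hwlt : md.κ w < cv := lt_of_le_of_ne (hall w memw) hwc
          have hwb' : md.le' w b := md.κ_lt hbw.symm (by rw [hbc]; exact hwlt)
          have hsb : md.le' (md.jn a w) b := md.jn_lub hab' hwb'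
          have hsκ : md.κ (md.jn a w) < cv := by
            rw [md.jn_κ]
            exact max_lt hi hwlt
          have hsne : md.jn a w ≠ b := fun h => absurd hbc (h ▸ ne_of_lt hsκ)
          have hsJ : md.jn a w ∈ C.J := by
            rcases md.betw (md.jn_l a w) hsb with ⟨h1, h2⟩ | ⟨h1, h2⟩
            · exact C.conv a ha b hbJ _ h1 h2
            · exact C.conv b hbJ a ha _ h1 h2
          have o₃ : a ≤ md.jn a w ∨ md.jn a w ≤ a := md.cmp' (md.jn_l a w)
          have o₄ : md.jn a w ≤ w ∨ w ≤ md.jn a w := (md.cmp' (md.jn_r a w)).symm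
          refine ⟨.cons a ha o₃ (.cons (md.jn a w) hsJ o₄ p2), ?_, ?_, ?_, ?_⟩
          · exact LinearEquiv.ext fun v => congrArg (fun t => C.T p2 t)
              (DFunLike.congr_fun (hstep ha hbJ hwJ hsJ hab' hwb' (md.jn_l a w)
                (md.jn_r a w) hsb hab hbw o₃ o₄) v).symm
          · have hrk : md.rk (md.jn a w) < md.rk b :=
              md.rk_lt hsb hsne (hu b memb).1 (hu b memb).2
            simp only [Pth.mes]; omega
          · intro x hx
            rcases List.mem_cons.1 hx with h | h
            · exact hu x (h ▸ mema)
            · rcases List.mem_cons.1 h with h' | h'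
              · subst h'
                exact ⟨md.jn_uX (hu a mema).1 (hu w memw).1,
                  md.jn_uY (hu a mema).2 (hu w memw).2⟩
              · exact hu x (List.mem_cons_of_mem _ (List.mem_cons_of_mem _ h'))
          · intro S hSc hS x hx
            rcases List.mem_cons.1 hx with h | h
            · exact hS x (h ▸ mema)
            · rcases List.mem_cons.1 h with h' | h'
              · subst h'
                rcases md.betw (md.jn_l a w) hsb with ⟨h1, h2⟩ | ⟨h1, h2⟩
                · exact hSc a (hS a mema) b (hS b memb) _ h1 h2
                · exact hSc b (hS b memb) a (hS a mema) _ h1 h2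
              · exact hS x (List.mem_cons_of_mem _ (List.mem_cons_of_mem _ h'))
    · -- the extremal point is in the tail
      have hblt : md.κ b < cv :=
        lt_of_le_of_ne (hall b (List.mem_cons_of_mem _ p.head_mem_pts)) hbc
      have hex' : ∃ x ∈ p.pts, md.κ x = cv := by
        rcases hex with ⟨x, hx, hxc⟩
        rcases List.mem_cons.1 hx with h | h
        · exact absurd hxc (by rw [h]; exact ne_of_lt hi)
        · exact ⟨x, h, hxc⟩
      rcases ih (fun x hx => hu x (List.mem_cons_of_mem _ hx))
          (fun x hx => hall x (List.mem_cons_of_mem _ hx)) hex' hblt hj with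
        ⟨q, hT, hm, hq, hpres⟩
      refine ⟨.cons a ha hab q, ?_, ?_, ?_, ?_⟩
      · exact LinearEquiv.ext fun v => DFunLike.congr_fun hT ((C.c ha q.headMem hab) v)
      · simp only [Pth.mes] at hm ⊢; omega
      · intro x hx
        rcases List.mem_cons.1 hx with h | h
        · exact hu x (h ▸ List.mem_cons_self)
        · exact hq x h
      · intro S hSc hS x hx
        rcases List.mem_cons.1 hx with h | h
        · exact hS x (h ▸ List.mem_cons_self)
        · exact hpres S hSc (fun y hy => hS y (List.mem_cons_of_mem _ hy)) x h

include hstep in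
theorem machine : ∀ (n : ℕ) {i j} (p : Pth C.J i j), p.mes md.rk ≤ n → UOK Xs Ys p →
    ∃ q : Pth C.J i j, C.T q = C.T p ∧ UOK Xs Ys q ∧
      (∀ x ∈ q.pts, md.κ x ≤ max (md.κ i) (md.κ j)) ∧
      (∀ S : Set (ℝ × ℝ), PosetConvex S → (∀ x ∈ p.pts, x ∈ S) → ∀ x ∈ q.pts, x ∈ S) := by
  intro n
  induction n with
  | zero => intro i j p hm _; exact absurd (le_trans (p.mes_pos md.rk) hm) (by omega)
  | succ n ih =>
    intro i j p hm hu
    by_cases hb : ∀ x ∈ p.pts, md.κ x ≤ max (md.κ i) (md.κ j)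
    · exact ⟨p, rfl, hu, hb, fun _ _ h => h⟩
    · push_neg at hb
      obtain ⟨x₀, hx₀, hgt⟩ := hb
      have hne : ((p.pts.toFinset).image md.κ).Nonempty :=
        ⟨md.κ x₀, Finset.mem_image_of_mem _ (List.mem_toFinset.2 hx₀)⟩
      set cv := ((p.pts.toFinset).image md.κ).max' hne with hcv
      have hall : ∀ x ∈ p.pts, md.κ x ≤ cv := fun x hx =>
        Finset.le_max' _ _ (Finset.mem_image_of_mem _ (List.mem_toFinset.2 hx))
      have hex : ∃ x ∈ p.pts, md.κ x = cv := by
        have := Finset.max'_mem _ hne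
        rcases Finset.mem_image.1 this with ⟨x, hx, hxe⟩
        exact ⟨x, List.mem_toFinset.1 hx, hxe⟩
      have hicv : md.κ i < cv :=
        lt_of_le_of_lt (le_max_left _ (md.κ j)) (lt_of_lt_of_le hgt (hall x₀ hx₀))
      have hjcv : md.κ j < cv :=
        lt_of_le_of_lt (le_max_right (md.κ i) _) (lt_of_lt_of_le hgt (hall x₀ hx₀))
      rcases locate C Xs Ys md hstep cv p hu hall hex hicv hjcv with ⟨q, hT, hmlt, huq, hpres⟩
      rcases ih q (by omega) huq with ⟨r, hT', hur, hbound, hpres'⟩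
      exact ⟨r, hT'.trans hT, hur, hbound,
        fun S hSc hS x hx => hpres' S hSc (hpres S hSc hS) x hx⟩

end Machine

/-! ### Concrete modes and the box lemma -/

section Modes
variable (Xs Ys : Finset ℝ)

theorem filter_card_mono {r s : ℝ} (h : r ≤ s) :
    (Xs.filter (· ≤ r)).card ≤ (Xs.filter (· ≤ s)).card :=
  Finset.card_le_card (Finset.monotone_filter_right _ (fun t _ ht => le_trans ht h))

theorem filter_card_strict {r s : ℝ} (h : r < s) (hs : s ∈ Xs) :
    (Xs.filter (· ≤ r)).card < (Xs.filter (· ≤ s)).card := by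
  apply Finset.card_lt_card
  refine (Finset.ssubset_iff_of_subset
    (Finset.monotone_filter_right _ (fun t _ ht => le_trans ht h.le))).2 ?_
  exact ⟨s, Finset.mem_filter.2 ⟨hs, le_rfl⟩, fun hc => absurd (Finset.mem_filter.1 hc).2
    (not_le.2 h)⟩

theorem filter_card_mono' {r s : ℝ} (h : s ≤ r) :
    (Xs.filter (r ≤ ·)).card ≤ (Xs.filter (s ≤ ·)).card :=
  Finset.card_le_card (Finset.monotone_filter_right _ (fun t _ ht => le_trans h ht))

theorem filter_card_strict' {r s : ℝ} (h : s < r) (hs : s ∈ Xs) :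
    (Xs.filter (r ≤ ·)).card < (Xs.filter (s ≤ ·)).card := by
  apply Finset.card_lt_card
  refine (Finset.ssubset_iff_of_subset
    (Finset.monotone_filter_right _ (fun t _ ht => le_trans h.le ht))).2 ?_
  exact ⟨s, Finset.mem_filter.2 ⟨hs, le_rfl⟩, fun hc => absurd (Finset.mem_filter.1 hc).2
    (not_le.2 h)⟩

/-- Upward mode with column functional `k`. -/
def modeUp (k : ℝ × ℝ → ℝ) (hmono : ∀ {x y : ℝ × ℝ}, x ≤ y → k x ≤ k y)
    (hklt : ∀ {x y : ℝ × ℝ}, (x ≤ y ∨ y ≤ x) → k x < k y → x ≤ y)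
    (hkeq : ∀ {x y : ℝ × ℝ}, k x = k y → (x ≤ y ∨ y ≤ x))
    (hkj : ∀ x y : ℝ × ℝ, k (x ⊔ y) = max (k x) (k y)) : Mode Xs Ys where
  le' := (· ≤ ·)
  trans' := le_trans
  tot := id
  cmp' := Or.inl
  betw := fun h1 h2 => Or.inl ⟨h1, h2⟩
  κ := k
  κ_lt := hklt
  κ_mono := hmono
  κ_eq := hkeq
  jn := (· ⊔ ·)
  jn_l := fun _ _ => le_sup_left
  jn_r := fun _ _ => le_sup_right
  jn_lub := fun h1 h2 => sup_le h1 h2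
  jn_κ := hkj
  jn_uX := fun {x y} hx hy => by
    rw [Prod.fst_sup]
    rcases le_total x.1 y.1 with h | h
    · rw [max_eq_right h]; exact hy
    · rw [max_eq_left h]; exact hx
  jn_uY := fun {x y} hx hy => by
    rw [Prod.snd_sup]
    rcases le_total x.2 y.2 with h | h
    · rw [max_eq_right h]; exact hy
    · rw [max_eq_left h]; exact hx
  rk := fun p => (Xs.filter (· ≤ p.1)).card + (Ys.filter (· ≤ p.2)).card
  rk_lt := fun {x y} hle hne h1 h2 => by
    rcases Prod.le_def.1 hle with ⟨ha, hb⟩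
    have : x.1 < y.1 ∨ x.2 < y.2 := by
      rcases lt_or_eq_of_le ha with h | h
      · exact Or.inl h
      · rcases lt_or_eq_of_le hb with h' | h'
        · exact Or.inr h'
        · exact absurd (Prod.ext h h') hne
    rcases this with h | h
    · exact add_lt_add_of_lt_of_le (filter_card_strict Xs h h1) (filter_card_mono Ys hb)
    · exact add_lt_add_of_le_of_lt (filter_card_mono Xs ha) (filter_card_strict Ys h h2)

/-- Downward mode with column functional `k`. -/
def modeDown (k : ℝ × ℝ → ℝ) (hmono : ∀ {x y : ℝ × ℝ}, x ≤ y → k x ≤ k y)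
    (hklt : ∀ {x y : ℝ × ℝ}, (x ≤ y ∨ y ≤ x) → k x < k y → x ≤ y)
    (hkeq : ∀ {x y : ℝ × ℝ}, k x = k y → (x ≤ y ∨ y ≤ x))
    (hkm : ∀ x y : ℝ × ℝ, k (x ⊓ y) = min (k x) (k y)) : Mode Xs Ys where
  le' := fun x y => y ≤ x
  trans' := fun h1 h2 => h2.trans h1
  tot := Or.symm
  cmp' := Or.inr
  betw := fun h1 h2 => Or.inr ⟨h2, h1⟩
  κ := fun p => -(k p)
  κ_lt := fun hc h => hklt hc.symm (neg_lt_neg_iff.1 h)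
  κ_mono := fun h => neg_le_neg (hmono h)
  κ_eq := fun h => hkeq (neg_inj.1 h)
  jn := (· ⊓ ·)
  jn_l := fun _ _ => inf_le_left
  jn_r := fun _ _ => inf_le_right
  jn_lub := fun h1 h2 => le_inf h1 h2
  jn_κ := fun x y => by
    show -(k (x ⊓ y)) = max (-(k x)) (-(k y))
    rw [hkm]
    rcases le_total (k x) (k y) with h | h
    · rw [min_eq_left h, max_eq_left (by linarith : -(k y) ≤ -(k x))]
    · rw [min_eq_right h, max_eq_right (by linarith : -(k x) ≤ -(k y))]
  jn_uX := fun {x y} hx hy => by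
    rw [Prod.fst_inf]
    rcases le_total x.1 y.1 with h | h
    · rw [min_eq_left h]; exact hx
    · rw [min_eq_right h]; exact hy
  jn_uY := fun {x y} hx hy => by
    rw [Prod.snd_inf]
    rcases le_total x.2 y.2 with h | h
    · rw [min_eq_left h]; exact hx
    · rw [min_eq_right h]; exact hy
  rk := fun p => (Xs.filter (p.1 ≤ ·)).card + (Ys.filter (p.2 ≤ ·)).card
  rk_lt := fun {x y} hle hne h1 h2 => by
    rcases Prod.le_def.1 hle with ⟨ha, hb⟩
    have : y.1 < x.1 ∨ y.2 < x.2 := by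
      rcases lt_or_eq_of_le ha with h | h
      · exact Or.inl h
      · rcases lt_or_eq_of_le hb with h' | h'
        · exact Or.inr h'
        · exact absurd (Prod.ext h.symm h'.symm) hne
    rcases this with h | h
    · exact add_lt_add_of_lt_of_le (filter_card_strict' Xs h h1) (filter_card_mono' Ys hb)
    · exact add_lt_add_of_le_of_lt (filter_card_mono' Xs ha) (filter_card_strict' Ys h h2)

theorem fst_mono {x y : ℝ × ℝ} (h : x ≤ y) : x.1 ≤ y.1 := (Prod.le_def.1 h).1
theorem snd_mono {x y : ℝ × ℝ} (h : x ≤ y) : x.2 ≤ y.2 := (Prod.le_def.1 h).2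

theorem fst_lt_le {x y : ℝ × ℝ} (hc : x ≤ y ∨ y ≤ x) (h : x.1 < y.1) : x ≤ y := by
  rcases hc with h' | h'
  · exact h'
  · exact absurd (fst_mono h') (not_le.2 h)

theorem snd_lt_le {x y : ℝ × ℝ} (hc : x ≤ y ∨ y ≤ x) (h : x.2 < y.2) : x ≤ y := by
  rcases hc with h' | h'
  · exact h'
  · exact absurd (snd_mono h') (not_le.2 h)

theorem fst_eq_cmp {x y : ℝ × ℝ} (h : x.1 = y.1) : x ≤ y ∨ y ≤ x := by
  rcases le_total x.2 y.2 with h' | h'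
  · exact Or.inl (Prod.le_def.2 ⟨le_of_eq h, h'⟩)
  · exact Or.inr (Prod.le_def.2 ⟨le_of_eq h.symm, h'⟩)

theorem snd_eq_cmp {x y : ℝ × ℝ} (h : x.2 = y.2) : x ≤ y ∨ y ≤ x := by
  rcases le_total x.1 y.1 with h' | h'
  · exact Or.inl (Prod.le_def.2 ⟨h', le_of_eq h⟩)
  · exact Or.inr (Prod.le_def.2 ⟨h', le_of_eq h.symm⟩)

def modeA : Mode Xs Ys :=
  modeUp Xs Ys Prod.fst fst_mono fst_lt_le fst_eq_cmp
    (fun x y => by rw [Prod.fst_sup])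

def modeB : Mode Xs Ys :=
  modeUp Xs Ys Prod.snd snd_mono snd_lt_le snd_eq_cmp
    (fun x y => by rw [Prod.snd_sup])

def modeC : Mode Xs Ys :=
  modeDown Xs Ys Prod.fst fst_mono fst_lt_le fst_eq_cmp
    (fun x y => by rw [Prod.fst_inf])

def modeD : Mode Xs Ys :=
  modeDown Xs Ys Prod.snd snd_mono snd_lt_le snd_eq_cmp
    (fun x y => by rw [Prod.snd_inf])

end Modes

theorem convex_fst_le (r : ℝ) : PosetConvex {x : ℝ × ℝ | x.1 ≤ r} :=
  fun _ _ k hk j hij hjk => le_trans (fst_mono hjk) hk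
theorem convex_snd_le (r : ℝ) : PosetConvex {x : ℝ × ℝ | x.2 ≤ r} :=
  fun _ _ k hk j hij hjk => le_trans (snd_mono hjk) hk
theorem convex_fst_ge (r : ℝ) : PosetConvex {x : ℝ × ℝ | r ≤ x.1} :=
  fun i hi _ _ j hij _ => le_trans hi (fst_mono hij)
theorem convex_snd_ge (r : ℝ) : PosetConvex {x : ℝ × ℝ | r ≤ x.2} :=
  fun i hi _ _ j hij _ => le_trans hi (snd_mono hij)

variable {M : PersistenceModule F (ℝ × ℝ)}

/-- **Box lemma**: every path can be replaced (same transport) by one inside the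
box `[i ⊓ j, i ⊔ j]`. -/
theorem Ctx.boxPath (C : Ctx F M) {i j} (p : Pth C.J i j) :
    ∃ q : Pth C.J i j, C.T q = C.T p ∧ ∀ x ∈ q.pts, i ⊓ j ≤ x ∧ x ≤ i ⊔ j := by
  classical
  set Xs := (p.pts.map Prod.fst).toFinset with hXs
  set Ys := (p.pts.map Prod.snd).toFinset with hYs
  have hu : UOK Xs Ys p := fun x hx =>
    ⟨List.mem_toFinset.2 (List.mem_map_of_mem hx), List.mem_toFinset.2 (List.mem_map_of_mem hx)⟩
  have hstepU : ∀ {x y z s} (hx : x ∈ C.J) (hy : y ∈ C.J) (hz : z ∈ C.J) (hs : s ∈ C.J),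
      x ≤ y → z ≤ y → x ≤ s → z ≤ s → s ≤ y →
      ∀ (o₁ : x ≤ y ∨ y ≤ x) (o₂ : y ≤ z ∨ z ≤ y) (o₃ : x ≤ s ∨ s ≤ x) (o₄ : s ≤ z ∨ z ≤ s),
      (C.c hx hy o₁).trans (C.c hy hz o₂) = (C.c hx hs o₃).trans (C.c hs hz o₄) :=
    fun hx hy hz hs h1 h2 h3 h4 h5 o₁ o₂ o₃ o₄ =>
      C.stepUp hx hy hz hs h1 h2 h3 h4 h5 o₁ o₂ o₃ o₄
  have hstepD : ∀ {x y z s} (hx : x ∈ C.J) (hy : y ∈ C.J) (hz : z ∈ C.J) (hs : s ∈ C.J),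
      y ≤ x → y ≤ z → s ≤ x → s ≤ z → y ≤ s →
      ∀ (o₁ : x ≤ y ∨ y ≤ x) (o₂ : y ≤ z ∨ z ≤ y) (o₃ : x ≤ s ∨ s ≤ x) (o₄ : s ≤ z ∨ z ≤ s),
      (C.c hx hy o₁).trans (C.c hy hz o₂) = (C.c hx hs o₃).trans (C.c hs hz o₄) :=
    fun hx hy hz hs h1 h2 h3 h4 h5 o₁ o₂ o₃ o₄ =>
      C.stepDown hx hy hz hs h1 h2 h3 h4 h5 o₁ o₂ o₃ o₄
  obtain ⟨q1, hT1, hu1, hb1, hp1⟩ :=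
    machine C Xs Ys (modeA Xs Ys) hstepU (p.mes (modeA Xs Ys).rk) p le_rfl hu
  obtain ⟨q2, hT2, hu2, hb2, hp2⟩ :=
    machine C Xs Ys (modeB Xs Ys) hstepU (q1.mes (modeB Xs Ys).rk) q1 le_rfl hu1
  obtain ⟨q3, hT3, hu3, hb3, hp3⟩ :=
    machine C Xs Ys (modeC Xs Ys) hstepD (q2.mes (modeC Xs Ys).rk) q2 le_rfl hu2
  obtain ⟨q4, hT4, hu4, hb4, hp4⟩ :=
    machine C Xs Ys (modeD Xs Ys) hstepD (q3.mes (modeD Xs Ys).rk) q3 le_rfl hu3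
  refine ⟨q4, by rw [hT4, hT3, hT2, hT1], ?_⟩
  -- the four coordinate bounds
  have B1 : ∀ x ∈ q1.pts, x.1 ≤ max i.1 j.1 := hb1
  have B2 : ∀ x ∈ q2.pts, x.1 ≤ max i.1 j.1 :=
    hp2 _ (convex_fst_le _) B1
  have B2' : ∀ x ∈ q2.pts, x.2 ≤ max i.2 j.2 := hb2
  have B3 : ∀ x ∈ q3.pts, x.1 ≤ max i.1 j.1 := hp3 _ (convex_fst_le _) B2
  have B3' : ∀ x ∈ q3.pts, x.2 ≤ max i.2 j.2 := hp3 _ (convex_snd_le _) B2'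
  have B3'' : ∀ x ∈ q3.pts, min i.1 j.1 ≤ x.1 := by
    intro x hx
    have := hb3 x hx
    show min i.1 j.1 ≤ x.1
    have hmm : -(x.1) ≤ max (-(i.1)) (-(j.1)) := this
    rcases le_total i.1 j.1 with h | h
    · rw [min_eq_left h]
      rw [max_eq_left (by linarith : -(j.1) ≤ -(i.1))] at hmm
      linarith
    · rw [min_eq_right h]
      rw [max_eq_right (by linarith : -(i.1) ≤ -(j.1))] at hmm
      linarith
  have B4 : ∀ x ∈ q4.pts, x.1 ≤ max i.1 j.1 := hp4 _ (convex_fst_le _) B3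
  have B4' : ∀ x ∈ q4.pts, x.2 ≤ max i.2 j.2 := hp4 _ (convex_snd_le _) B3'
  have B4'' : ∀ x ∈ q4.pts, min i.1 j.1 ≤ x.1 := hp4 _ (convex_fst_ge _) B3''
  have B4''' : ∀ x ∈ q4.pts, min i.2 j.2 ≤ x.2 := by
    intro x hx
    have hmm : -(x.2) ≤ max (-(i.2)) (-(j.2)) := hb4 x hx
    rcases le_total i.2 j.2 with h | h
    · rw [min_eq_left h]
      rw [max_eq_left (by linarith : -(j.2) ≤ -(i.2))] at hmm
      linarith
    · rw [min_eq_right h]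
      rw [max_eq_right (by linarith : -(i.2) ≤ -(j.2))] at hmm
      linarith
  intro x hx
  constructor
  · rw [Prod.le_def, Prod.fst_inf, Prod.snd_inf]
    exact ⟨B4'' x hx, B4''' x hx⟩
  · rw [Prod.le_def, Prod.fst_sup, Prod.snd_sup]
    exact ⟨B4 x hx, B4' x hx⟩

/-! ### Path independence and canonical transports -/

theorem Ctx.c_self (C : Ctx F M) {a b} (ha : a ∈ C.J) (hb : b ∈ C.J)
    (hab : a ≤ b ∨ b ≤ a) (he : a = b) (v : M.V a) :
    C.c ha hb hab v = M.map (le_of_eq he) v := by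
  subst he
  rcases hab with h | h
  · rw [C.c_of_le ha hb _ h]; rfl
  · rw [C.c_of_ge ha hb _ h, C.em_refl]
    exact (map_refl_apply v).symm

theorem Ctx.T_const (C : Ctx F M) {i : ℝ × ℝ} :
    ∀ {a} (q : Pth C.J a i) (h : ∀ x ∈ q.pts, x = i) (v : M.V a),
      C.T q v = M.map (le_of_eq (h a q.head_mem_pts)) v := by
  intro a q
  induction q with
  | nil a ha => intro h v; exact (map_refl_apply v).symm
  | @cons a b c ha hab p ih =>
    intro h v
    have hb : b = c := h b (List.mem_cons_of_mem _ p.head_mem_pts)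
    have ha' : a = c := h a (List.mem_cons_self)
    have hstep : (C.c ha p.headMem hab) v = M.map (le_of_eq (ha'.trans hb.symm)) v :=
      C.c_self ha p.headMem hab (ha'.trans hb.symm) v
    show C.T p ((C.c ha p.headMem hab) v) = _
    rw [hstep, ih (fun x hx => h x (List.mem_cons_of_mem _ hx))]
    exact map_map _ _ v

theorem Ctx.T_loop (C : Ctx F M) {i} (p : Pth C.J i i) :
    C.T p = LinearEquiv.refl F _ := by
  obtain ⟨q, hT, hbox⟩ := C.boxPath p
  have hconst : ∀ x ∈ q.pts, x = i := fun x hx =>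
    le_antisymm (by simpa [sup_idem] using (hbox x hx).2)
      (by simpa [inf_idem] using (hbox x hx).1)
  rw [← hT]
  exact LinearEquiv.ext fun v => by
    rw [C.T_const q hconst v]; exact map_refl_apply v

/-- Path independence of the transport. -/
theorem Ctx.T_pi (C : Ctx F M) {i j} (p q : Pth C.J i j) : C.T p = C.T q := by
  have hl := C.T_loop (p.app q.rev)
  rw [C.T_app, C.T_rev] at hl
  exact LinearEquiv.ext fun v => by
    have h := DFunLike.congr_fun hl v
    have h' : (C.T q).symm (C.T p v) = v := h
    calc C.T p v = C.T q ((C.T q).symm (C.T p v)) := ((C.T q).apply_symm_apply _).symm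
    _ = C.T q v := by rw [h']

section Canon

variable (C : Ctx F M)
variable (hco : ∀ x y : ℝ × ℝ, x ∈ C.J → y ∈ C.J → Nonempty (Pth C.J x y))

/-- The canonical transport between any two points of `J`. -/
def Ctx.t {x y} (hx : x ∈ C.J) (hy : y ∈ C.J) : M.V x →ₗ[F] M.V y :=
  (C.T (hco x y hx hy).some).toLinearMap

include hco in
theorem Ctx.t_eq {x y} (hx : x ∈ C.J) (hy : y ∈ C.J) (p : Pth C.J x y) :
    C.t hco hx hy = (C.T p).toLinearMap :=
  congrArg LinearEquiv.toLinearMap (C.T_pi _ p)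

include hco in
theorem Ctx.t_comp {x y z} (hx : x ∈ C.J) (hy : y ∈ C.J) (hz : z ∈ C.J) :
    (C.t hco hy hz).comp (C.t hco hx hy) = C.t hco hx hz := by
  obtain p := (hco x y hx hy).some
  obtain q := (hco y z hy hz).some
  rw [C.t_eq hco hx hy p, C.t_eq hco hy hz q, C.t_eq hco hx hz (p.app q), C.T_app]
  rfl

include hco in
theorem Ctx.t_step {x y} (hx : x ∈ C.J) (hy : y ∈ C.J) (h : x ≤ y) :
    C.t hco hx hy = M.map h := by
  rw [C.t_eq hco hx hy (.cons x hx (Or.inl h) (.nil y hy))]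
  apply LinearMap.ext
  intro v
  show C.T (.nil y hy) ((C.c hx hy (Or.inl h)) v) = _
  rw [C.c_of_le hx hy _ h]
  rfl

include hco in
theorem Ctx.t_refl {x} (hx hx' : x ∈ C.J) : C.t hco hx hx' = LinearMap.id := by
  rw [C.t_step hco hx hx' (le_refl x), M.map_id]

include hco in
theorem Ctx.t_inj {x y} (hx : x ∈ C.J) (hy : y ∈ C.J) :
    Function.Injective (C.t hco hx hy) := by
  intro v w h
  have h2 := DFunLike.congr_fun (C.t_comp hco hx hy hx) v
  have h3 := DFunLike.congr_fun (C.t_comp hco hx hy hx) w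
  simp only [LinearMap.comp_apply, C.t_refl hco hx hx, LinearMap.id_apply] at h2 h3
  rw [h] at h2
  exact h2.symm.trans h3

theorem Ctx.TleU (C : Ctx F M) : ∀ {a b} (q : Pth C.J a b) (u : ℝ × ℝ)
    (_ : ∀ z ∈ q.pts, z ≤ u) (hau : a ≤ u) (hbu : b ≤ u) (v : M.V a),
    M.map hbu (C.T q v) = M.map hau v := by
  intro a b q
  induction q with
  | nil a ha => intro u hall hau hbu v; rfl
  | @cons a b' c ha hab p ih =>
    intro u hall hau hbu v
    have hb'u : b' ≤ u := hall b' (List.mem_cons_of_mem _ p.head_mem_pts)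
    show M.map hbu (C.T p ((C.c ha p.headMem hab) v)) = _
    rw [ih u (fun z hz => hall z (List.mem_cons_of_mem _ hz)) hb'u hbu]
    rcases hab with h | h
    · rw [C.c_of_le ha p.headMem _ h]
      exact map_map h hb'u v
    · rw [C.c_of_ge ha p.headMem _ h]
      calc M.map hb'u ((C.em p.headMem ha h).symm v)
          = M.map hau (M.map h ((C.em p.headMem ha h).symm v)) := (map_map _ _ _).symm
        _ = M.map hau v := by rw [C.map_em_symm]

theorem Ctx.TgeL (C : Ctx F M) : ∀ {a b} (q : Pth C.J a b) (l : ℝ × ℝ)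
    (_ : ∀ z ∈ q.pts, l ≤ z) (hla : l ≤ a) (hlb : l ≤ b) (v : M.V l),
    C.T q (M.map hla v) = M.map hlb v := by
  intro a b q
  induction q with
  | nil a ha => intro l hall hla hlb v; rfl
  | @cons a b' c ha hab p ih =>
    intro l hall hla hlb v
    have hlb' : l ≤ b' := hall b' (List.mem_cons_of_mem _ p.head_mem_pts)
    show C.T p ((C.c ha p.headMem hab) (M.map hla v)) = _
    have hkey : (C.c ha p.headMem hab) (M.map hla v) = M.map hlb' v := by
      rcases hab with h | h
      · rw [C.c_of_le ha p.headMem _ h]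
        exact map_map hla h v
      · rw [C.c_of_ge ha p.headMem _ h]
        have : M.map hla v = M.map h (M.map hlb' v) := (map_map hlb' h v).symm
        rw [this, C.em_symm_map]
    rw [hkey]
    exact ih l (fun z hz => hall z (List.mem_cons_of_mem _ hz)) hlb' hlb v

include hco in
/-- Lemma (C): transports absorb into maps to a common upper bound. -/
theorem Ctx.lemC {x y u : ℝ × ℝ} (hx : x ∈ C.J) (hy : y ∈ C.J)
    (hxu : x ≤ u) (hyu : y ≤ u) :
    (M.map hyu).comp (C.t hco hx hy) = M.map hxu := by
  obtain ⟨q, _, hbox⟩ := C.boxPath (hco x y hx hy).some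
  rw [C.t_eq hco hx hy q]
  apply LinearMap.ext
  intro v
  exact C.TleU q u (fun z hz => le_trans (hbox z hz).2 (sup_le hxu hyu)) hxu hyu v

include hco in
/-- Lemma (D): transports absorb maps from a common lower bound. -/
theorem Ctx.lemD {x y l : ℝ × ℝ} (hx : x ∈ C.J) (hy : y ∈ C.J)
    (hlx : l ≤ x) (hly : l ≤ y) :
    (C.t hco hx hy).comp (M.map hlx) = M.map hly := by
  obtain ⟨q, _, hbox⟩ := C.boxPath (hco x y hx hy).some
  rw [C.t_eq hco hx hy q]
  apply LinearMap.ext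
  intro v
  exact C.TgeL q l (fun z hz => le_trans (le_inf hlx hly) (hbox z hz).1) hlx hly v

end Canon

/-! ### Geometry: axis paths, crossings, and partners -/

theorem convex_le (u : ℝ × ℝ) : PosetConvex {x : ℝ × ℝ | x ≤ u} :=
  fun _ _ k hk j _ hjk => le_trans hjk hk
theorem convex_ge (u : ℝ × ℝ) : PosetConvex {x : ℝ × ℝ | u ≤ x} :=
  fun i hi _ _ j hij _ => le_trans hi hij

section Geom

variable (c₁ c₂ : ℝ × ℝ → ℝ)
variable (hc : ∀ x y : ℝ × ℝ, x ≤ y ↔ c₁ x ≤ c₁ y ∧ c₂ x ≤ c₂ y)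
variable (mk : ℝ → ℝ → ℝ × ℝ) (hmk1 : ∀ u v, c₁ (mk u v) = u) (hmk2 : ∀ u v, c₂ (mk u v) = v)

/-- Axis-aligned paths: every step changes only one coordinate. -/
def Axis {J : Set (ℝ × ℝ)} : ∀ {a b}, Pth J a b → Prop
  | _, _, .nil _ _ => True
  | _, _, @Pth.cons _ a b _ _ _ p => (c₁ a = c₁ b ∨ c₂ a = c₂ b) ∧ Axis p

include hc hmk1 hmk2 in
theorem axisify {J : Set (ℝ × ℝ)} (hJ : PosetConvex J) {a b} (p : Pth J a b) :
    ∃ q : Pth J a b, Axis c₁ c₂ q ∧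
      (∀ S : Set (ℝ × ℝ), PosetConvex S → (∀ x ∈ p.pts, x ∈ S) → ∀ x ∈ q.pts, x ∈ S) := by
  induction p with
  | nil a ha => exact ⟨.nil a ha, trivial, fun S _ hS => hS⟩
  | @cons a b d ha hab p ih =>
    obtain ⟨q, hqax, hqS⟩ := ih
    have hbJ : b ∈ J := p.headMem
    by_cases hax : c₁ a = c₁ b ∨ c₂ a = c₂ b
    · refine ⟨.cons a ha hab q, ⟨?_, hqax⟩, ?_⟩
      · have : q.headMem = q.headMem := rfl
        exact hax
      · intro S hSc hS x hx
        rcases List.mem_cons.1 hx with h | h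
        · exact hS x (h ▸ List.mem_cons_self)
        · exact hqS S hSc (fun y hy => hS y (List.mem_cons_of_mem _ hy)) x h
    · set k := mk (c₁ b) (c₂ a) with hk
      have hk1 : c₁ k = c₁ b := hmk1 _ _
      have hk2 : c₂ k = c₂ a := hmk2 _ _
      rcases hab with hle | hge
      · have hak : a ≤ k := (hc a k).2 ⟨by rw [hk1]; exact ((hc a b).1 hle).1, le_of_eq hk2.symm⟩
        have hkb : k ≤ b := (hc k b).2 ⟨le_of_eq hk1, by rw [hk2]; exact ((hc a b).1 hle).2⟩
        have hkJ : k ∈ J := hJ a ha b hbJ k hak hkb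
        refine ⟨.cons a ha (Or.inl hak) (.cons k hkJ (Or.inl hkb) q), ⟨Or.inr hk2.symm,
          Or.inl hk1, hqax⟩, ?_⟩
        intro S hSc hS x hx
        rcases List.mem_cons.1 hx with h | h
        · exact hS x (h ▸ List.mem_cons_self)
        · rcases List.mem_cons.1 h with h' | h'
          · rw [h']
            exact hSc a (hS a (List.mem_cons_self)) b
              (hS b (List.mem_cons_of_mem _ p.head_mem_pts)) k hak hkb
          · exact hqS S hSc (fun y hy => hS y (List.mem_cons_of_mem _ hy)) x h'
      · have hbk : b ≤ k := (hc b k).2 ⟨le_of_eq hk1.symm, by rw [hk2]; exact ((hc b a).1 hge).2⟩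
        have hka : k ≤ a := (hc k a).2 ⟨by rw [hk1]; exact ((hc b a).1 hge).1, le_of_eq hk2⟩
        have hkJ : k ∈ J := hJ b hbJ a ha k hbk hka
        refine ⟨.cons a ha (Or.inr hka) (.cons k hkJ (Or.inr hbk) q), ⟨Or.inr hk2.symm,
          Or.inl hk1, hqax⟩, ?_⟩
        intro S hSc hS x hx
        rcases List.mem_cons.1 hx with h | h
        · exact hS x (h ▸ List.mem_cons_self)
        · rcases List.mem_cons.1 h with h' | h'
          · rw [h']
            exact hSc b (hS b (List.mem_cons_of_mem _ p.head_mem_pts)) a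
              (hS a (List.mem_cons_self)) k hbk hka
          · exact hqS S hSc (fun y hy => hS y (List.mem_cons_of_mem _ hy)) x h'

include hc hmk1 hmk2 in
/-- Crossing a vertical line downward. -/
theorem cross1 {J : Set (ℝ × ℝ)} (hJ : PosetConvex J) {a b} (p : Pth J a b)
    (hax : Axis c₁ c₂ p) (r : ℝ) (hra : r < c₁ a) (hbr : c₁ b ≤ r) :
    ∃ k ∈ J, c₁ k = r ∧ (∃ w ∈ p.pts, c₂ k = c₂ w) ∧
      (∀ S : Set (ℝ × ℝ), PosetConvex S → (∀ x ∈ p.pts, x ∈ S) → k ∈ S) := by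
  induction p with
  | nil a ha => exact absurd hbr (not_le.2 hra)
  | @cons a b d ha hab p ih =>
    have hbJ : b ∈ J := p.headMem
    by_cases hb : c₁ b ≤ r
    · -- crossing on this step
      have hc2 : c₂ a = c₂ b := by
        rcases hax.1 with h | h
        · exact absurd (h ▸ hra) (not_lt.2 hb)
        · exact h
      set k := mk r (c₂ a) with hkdef
      have hk1 : c₁ k = r := hmk1 _ _
      have hk2 : c₂ k = c₂ a := hmk2 _ _
      have hbk : b ≤ k := (hc b k).2 ⟨by rw [hk1]; exact hb, by rw [hk2, hc2]⟩
      have hka : k ≤ a := (hc k a).2 ⟨by rw [hk1]; exact hra.le, le_of_eq hk2⟩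
      refine ⟨k, hJ b hbJ a ha k hbk hka, hk1, ⟨a, List.mem_cons_self, hk2⟩, ?_⟩
      intro S hSc hS
      exact hSc b (hS b (List.mem_cons_of_mem _ p.head_mem_pts)) a
        (hS a (List.mem_cons_self)) k hbk hka
    · obtain ⟨k, hkJ, hk1, ⟨w, hw, hkw⟩, hkS⟩ := ih hax.2 (not_le.1 hb) hbr
      exact ⟨k, hkJ, hk1, ⟨w, List.mem_cons_of_mem _ hw, hkw⟩,
        fun S hSc hS => hkS S hSc (fun y hy => hS y (List.mem_cons_of_mem _ hy))⟩

include hc hmk1 hmk2 in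
/-- Crossing a horizontal line upward. -/
theorem cross2 {J : Set (ℝ × ℝ)} (hJ : PosetConvex J) {a b} (p : Pth J a b)
    (hax : Axis c₁ c₂ p) (h : ℝ) (hah : c₂ a < h) (hhb : h ≤ c₂ b) :
    ∃ k ∈ J, c₂ k = h ∧
      (∀ S : Set (ℝ × ℝ), PosetConvex S → (∀ x ∈ p.pts, x ∈ S) → k ∈ S) := by
  induction p with
  | nil a ha => exact absurd hhb (not_le.2 hah)
  | @cons a b d ha hab p ih =>
    have hbJ : b ∈ J := p.headMem
    by_cases hb : h ≤ c₂ b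
    · have hc1 : c₁ a = c₁ b := by
        rcases hax.1 with h' | h'
        · exact h'
        · exact absurd (h' ▸ hah) (not_lt.2 hb)
      set k := mk (c₁ a) h with hkdef
      have hk1 : c₁ k = c₁ a := hmk1 _ _
      have hk2 : c₂ k = h := hmk2 _ _
      have hak : a ≤ k := (hc a k).2 ⟨le_of_eq hk1.symm, by rw [hk2]; exact hah.le⟩
      have hkb : k ≤ b := (hc k b).2 ⟨by rw [hk1, hc1], by rw [hk2]; exact hb⟩
      refine ⟨k, hJ a ha b hbJ k hak hkb, hk2, ?_⟩
      intro S hSc hS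
      exact hSc a (hS a (List.mem_cons_self)) b
        (hS b (List.mem_cons_of_mem _ p.head_mem_pts)) k hak hkb
    · obtain ⟨k, hkJ, hk2, hkS⟩ := ih hax.2 (not_le.1 hb) hhb
      exact ⟨k, hkJ, hk2,
        fun S hSc hS => hkS S hSc (fun y hy => hS y (List.mem_cons_of_mem _ hy))⟩

include hc in
theorem c₁_mono {x y : ℝ × ℝ} (h : x ≤ y) : c₁ x ≤ c₁ y := ((hc x y).1 h).1
include hc in
theorem c₂_mono {x y : ℝ × ℝ} (h : x ≤ y) : c₂ x ≤ c₂ y := ((hc x y).1 h).2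

include hc hmk1 hmk2 in
theorem le_mk_max (x y : ℝ × ℝ) :
    x ⊔ y ≤ mk (max (c₁ x) (c₁ y)) (max (c₂ x) (c₂ y)) := by
  apply sup_le
  · exact (hc _ _).2 ⟨by rw [hmk1]; exact le_max_left _ _, by rw [hmk2]; exact le_max_left _ _⟩
  · exact (hc _ _).2 ⟨by rw [hmk1]; exact le_max_right _ _, by rw [hmk2]; exact le_max_right _ _⟩

include hc hmk1 hmk2 in
theorem mk_min_le (x y : ℝ × ℝ) :
    mk (min (c₁ x) (c₁ y)) (min (c₂ x) (c₂ y)) ≤ x ⊓ y := by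
  apply le_inf
  · exact (hc _ _).2 ⟨by rw [hmk1]; exact min_le_left _ _, by rw [hmk2]; exact min_le_left _ _⟩
  · exact (hc _ _).2 ⟨by rw [hmk1]; exact min_le_right _ _, by rw [hmk2]; exact min_le_right _ _⟩

section NoBad

variable {J₁ J₂ : Set (ℝ × ℝ)} (hv₁ : PosetConvex J₁) (hv₂ : PosetConvex J₂)
variable (hdisj : ∀ x : ℝ × ℝ, x ∈ J₁ → x ∈ J₂ → False)
variable {α γ β δ : ℝ × ℝ}
variable (hα : α ∈ J₁) (hγ : γ ∈ J₁) (hβ : β ∈ J₂) (hδ : δ ∈ J₂)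
variable (hαβ : α ≤ β) (hγδ : γ ≤ δ)
variable (h1 : c₁ δ < c₁ α) (h2 : c₂ β < c₂ γ)
variable {W : Pth J₁ α γ} (hWax : Axis c₁ c₂ W) (hWbox : ∀ x ∈ W.pts, x ≤ α ⊔ γ)
variable {Z : Pth J₂ β δ} (hZax : Axis c₁ c₂ Z) (hZbox : ∀ x ∈ Z.pts, β ⊓ δ ≤ x)

include hc hmk1 hmk2 hv₁ hv₂ hdisj hα hγ hβ hδ hαβ hγδ h1 h2 hWax hWbox hZax hZbox in
theorem noBadStep (y : ℝ × ℝ) (hy : y ∈ J₂) (hy1 : c₁ δ ≤ c₁ y) (hy2 : c₂ β ≤ c₂ y)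
    (hbad : ∀ w ∈ J₁, ¬ w ≤ y) :
    ∃ d : ℝ × ℝ, d ∈ J₂ ∧ c₁ δ ≤ c₁ d ∧ c₂ β ≤ c₂ d ∧ (∀ w ∈ J₁, ¬ w ≤ d) ∧
      c₂ y < c₂ d ∧ c₂ d ∈ (W.pts.map c₂) := by
  -- basic coordinates
  have hγ1 : c₁ γ ≤ c₁ δ := c₁_mono c₁ c₂ hc hγδ
  have hα2 : c₂ α ≤ c₂ β := c₂_mono c₁ c₂ hc hαβ
  have hyγ : c₂ y < c₂ γ := by
    by_contra hcon
    exact hbad γ hγ ((hc γ y).2 ⟨le_trans hγ1 hy1, not_lt.1 hcon⟩)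
  have hyα : c₁ y < c₁ α := by
    by_contra hcon
    exact hbad α hα ((hc α y).2 ⟨not_lt.1 hcon, le_trans hα2 hy2⟩)
  -- cross W at the vertical line c₁ = c₁ y
  obtain ⟨v, hvJ, hv1, ⟨w₀, hw₀, hvw₀⟩, hvS⟩ :=
    cross1 c₁ c₂ hc mk hmk1 hmk2 hv₁ W hWax (c₁ y) hyα (le_trans hγ1 hy1)
  have hyv2 : c₂ y < c₂ v := by
    by_contra hcon
    exact hbad v hvJ ((hc v y).2 ⟨le_of_eq hv1, not_lt.1 hcon⟩)
  have hyv : y ≤ v := (hc y v).2 ⟨le_of_eq hv1.symm, hyv2.le⟩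
  have hvUp : ∀ z ∈ J₂, ¬ v ≤ z := by
    intro z hz hvz
    exact hdisj v hvJ (hv₂ y hy z hz v hyv hvz)
  -- v is inside the box of W, so c₂ v ≤ c₂ γ
  have hvbox : v ≤ α ⊔ γ := hvS _ (convex_le _) hWbox
  have hvγ : c₂ v ≤ c₂ γ := by
    have := c₂_mono c₁ c₂ hc (le_trans hvbox (le_mk_max c₁ c₂ hc mk hmk1 hmk2 α γ))
    rw [hmk2] at this
    calc c₂ v ≤ max (c₂ α) (c₂ γ) := this
      _ = c₂ γ := max_eq_right (le_trans hα2 h2.le)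
  -- cross Z at the horizontal line c₂ = c₂ v
  obtain ⟨d, hdJ, hd2, hdS⟩ := cross2 c₁ c₂ hc mk hmk1 hmk2 hv₂ Z hZax (c₂ v)
    (lt_of_le_of_lt hy2 hyv2) (le_trans hvγ (c₂_mono c₁ c₂ hc hγδ))
  have hdv1 : c₁ d < c₁ v := by
    by_contra hcon
    exact hvUp d hdJ ((hc v d).2 ⟨not_lt.1 hcon, le_of_eq hd2.symm⟩)
  have hdv : d ≤ v := (hc d v).2 ⟨hdv1.le, le_of_eq hd2⟩
  have hdbad : ∀ w ∈ J₁, ¬ w ≤ d := by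
    intro w hw hwd
    exact hdisj d (hv₁ w hw v hvJ d hwd hdv) hdJ
  have hdbox : β ⊓ δ ≤ d := hdS _ (convex_ge _) hZbox
  have hd1 : c₁ δ ≤ c₁ d := by
    have := c₁_mono c₁ c₂ hc (le_trans (mk_min_le c₁ c₂ hc mk hmk1 hmk2 β δ) hdbox)
    rw [hmk1] at this
    calc c₁ δ = min (c₁ β) (c₁ δ) :=
        (min_eq_right (le_trans h1.le (c₁_mono c₁ c₂ hc hαβ))).symm
      _ ≤ c₁ d := this
  refine ⟨d, hdJ, hd1, le_trans hy2 (by rw [hd2]; exact hyv2.le), hdbad, ?_, ?_⟩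
  · rw [hd2]; exact hyv2
  · rw [hd2, hvw₀]
    exact List.mem_map_of_mem hw₀

include hc hmk1 hmk2 hv₁ hv₂ hdisj hα hγ hβ hδ hαβ hγδ h1 h2 hWax hWbox hZax hZbox in
theorem noBad : ∀ (n : ℕ) (y : ℝ × ℝ), y ∈ J₂ → c₁ δ ≤ c₁ y → c₂ β ≤ c₂ y →
    (∀ w ∈ J₁, ¬ w ≤ y) →
    (((W.pts.map c₂).toFinset.filter (c₂ y < ·)).card ≤ n) → False := by
  intro n
  induction n with
  | zero =>
    intro y hy hy1 hy2 hbad hcard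
    obtain ⟨d, _, _, _, _, hlt, hmem⟩ := noBadStep c₁ c₂ hc mk hmk1 hmk2 hv₁ hv₂ hdisj
      hα hγ hβ hδ hαβ hγδ h1 h2 hWax hWbox hZax hZbox y hy hy1 hy2 hbad
    have : c₂ d ∈ (W.pts.map c₂).toFinset.filter (c₂ y < ·) :=
      Finset.mem_filter.2 ⟨List.mem_toFinset.2 hmem, hlt⟩
    have := Finset.card_pos.2 ⟨_, this⟩
    omega
  | succ n ih =>
    intro y hy hy1 hy2 hbad hcard
    obtain ⟨d, hdJ, hd1, hd2, hdbad, hlt, hmem⟩ := noBadStep c₁ c₂ hc mk hmk1 hmk2 hv₁ hv₂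
      hdisj hα hγ hβ hδ hαβ hγδ h1 h2 hWax hWbox hZax hZbox y hy hy1 hy2 hbad
    apply ih d hdJ hd1 hd2 hdbad
    have hsub : (W.pts.map c₂).toFinset.filter (c₂ d < ·) ⊂
        (W.pts.map c₂).toFinset.filter (c₂ y < ·) := by
      rw [Finset.ssubset_iff_of_subset (Finset.monotone_filter_right _
        (fun t _ ht => lt_trans hlt ht))]
      exact ⟨c₂ d, Finset.mem_filter.2 ⟨List.mem_toFinset.2 hmem, hlt⟩,
        fun hcon => absurd (Finset.mem_filter.1 hcon).2 (lt_irrefl _)⟩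
    have := Finset.card_lt_card hsub
    omega

include hc hmk1 hmk2 hv₁ hv₂ hdisj hα hγ hβ hδ hαβ hγδ h1 h2 hWax hWbox hZax hZbox in
/-- Every point on `Z` has a partner in `J₁` below it. -/
theorem partners : ∀ y ∈ Z.pts, ∃ w ∈ J₁, w ≤ y := by
  intro y hy
  by_contra hcon
  push_neg at hcon
  have hyJ : y ∈ J₂ := Z.pts_mem y hy
  have hybox : β ⊓ δ ≤ y := hZbox y hy
  have hy1 : c₁ δ ≤ c₁ y := by
    have := c₁_mono c₁ c₂ hc (le_trans (mk_min_le c₁ c₂ hc mk hmk1 hmk2 β δ) hybox)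
    rw [hmk1] at this
    calc c₁ δ = min (c₁ β) (c₁ δ) :=
        (min_eq_right (le_trans h1.le (c₁_mono c₁ c₂ hc hαβ))).symm
      _ ≤ c₁ y := this
  have hy2 : c₂ β ≤ c₂ y := by
    have := c₂_mono c₁ c₂ hc (le_trans (mk_min_le c₁ c₂ hc mk hmk1 hmk2 β δ) hybox)
    rw [hmk2] at this
    calc c₂ β = min (c₂ β) (c₂ δ) :=
        (min_eq_left (le_trans h2.le (c₂_mono c₁ c₂ hc hγδ))).symm
      _ ≤ c₂ y := this
  exact noBad c₁ c₂ hc mk hmk1 hmk2 hv₁ hv₂ hdisj hα hγ hβ hδ hαβ hγδ h1 h2 hWax hWbox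
    hZax hZbox _ y hyJ hy1 hy2 hcon le_rfl

end NoBad

end Geom

/-! ### Equality of cross maps -/

section Cross

variable {M : PersistenceModule F (ℝ × ℝ)}
variable (C₁ C₂ : Ctx F M)
variable (hdisj : ∀ x : ℝ × ℝ, x ∈ C₁.J → x ∈ C₂.J → False)
variable (hco₁ : ∀ x y : ℝ × ℝ, x ∈ C₁.J → y ∈ C₁.J → Nonempty (Pth C₁.J x y))
variable (hco₂ : ∀ x y : ℝ × ℝ, x ∈ C₂.J → y ∈ C₂.J → Nonempty (Pth C₂.J x y))
variable {L₁ : Type} [AddCommGroup L₁] [Module F L₁]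
variable (σ' : ∀ x : ℝ × ℝ, x ∈ C₁.J → (L₁ →ₗ[F] M.V x))
variable (hσ' : ∀ x y (hx : x ∈ C₁.J) (hy : y ∈ C₁.J) (h : x ≤ y),
    (M.map h).comp (σ' x hx) = σ' y hy)

include hσ' in
theorem sigma_T : ∀ {x y} (p : Pth C₁.J x y) (hx : x ∈ C₁.J) (hy : y ∈ C₁.J) (v : L₁),
    C₁.T p (σ' x hx v) = σ' y hy v := by
  intro x y p
  induction p with
  | nil a ha =>
    intro hx hy v
    have h := DFunLike.congr_fun (hσ' a a hx hy (le_refl a)) v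
    rw [LinearMap.comp_apply, map_refl_apply] at h
    exact h
  | @cons a b d ha hab p ih =>
    intro hx hy v
    have hbJ : b ∈ C₁.J := p.headMem
    show C₁.T p ((C₁.c ha p.headMem hab) (σ' a hx v)) = _
    have hkey : (C₁.c ha p.headMem hab) (σ' a hx v) = σ' b hbJ v := by
      rcases hab with h | h
      · rw [C₁.c_of_le ha p.headMem _ h]
        exact DFunLike.congr_fun (hσ' a b hx hbJ h) v
      · rw [C₁.c_of_ge ha p.headMem _ h]
        have : σ' a hx v = M.map h (σ' b hbJ v) := (DFunLike.congr_fun (hσ' b a hbJ hx h) v).symm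
        rw [this, C₁.em_symm_map]
    rw [hkey]
    exact ih hbJ hy v

include hσ' hco₁ in
theorem sigma_t {x y} (hx : x ∈ C₁.J) (hy : y ∈ C₁.J) (v : L₁) :
    C₁.t hco₁ hx hy (σ' x hx v) = σ' y hy v :=
  sigma_T C₁ σ' hσ' (hco₁ x y hx hy).some hx hy v

include hσ' hco₁ hco₂ in
theorem pairEq_L {l a a' b b' : ℝ × ℝ} (hl : l ∈ C₁.J) (ha : a ∈ C₁.J) (ha' : a' ∈ C₁.J)
    (hb : b ∈ C₂.J) (hb' : b' ∈ C₂.J) (hla : l ≤ a) (hla' : l ≤ a')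
    (hab : a ≤ b) (hab' : a' ≤ b') (v : L₁) :
    C₂.t hco₂ hb hb' (M.map hab (σ' a ha v)) = M.map hab' (σ' a' ha' v) := by
  have e1 : σ' a ha v = M.map hla (σ' l hl v) := (DFunLike.congr_fun (hσ' l a hl ha hla) v).symm
  have e2 : σ' a' ha' v = M.map hla' (σ' l hl v) :=
    (DFunLike.congr_fun (hσ' l a' hl ha' hla') v).symm
  rw [e1, e2, map_map, map_map]
  exact DFunLike.congr_fun (C₂.lemD hco₂ hb hb' (hla.trans hab) (hla'.trans hab')) (σ' l hl v)

include hσ' hco₁ hco₂ in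
theorem pairEq_U {u a a' b b' : ℝ × ℝ} (hu : u ∈ C₂.J) (ha : a ∈ C₁.J) (ha' : a' ∈ C₁.J)
    (hb : b ∈ C₂.J) (hb' : b' ∈ C₂.J) (hbu : b ≤ u) (hb'u : b' ≤ u)
    (hab : a ≤ b) (hab' : a' ≤ b') (v : L₁) :
    C₂.t hco₂ hb hb' (M.map hab (σ' a ha v)) = M.map hab' (σ' a' ha' v) := by
  apply C₂.t_inj hco₂ hb' hu
  have e1 : C₂.t hco₂ hb' hu (C₂.t hco₂ hb hb' (M.map hab (σ' a ha v))) =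
      C₂.t hco₂ hb hu (M.map hab (σ' a ha v)) :=
    DFunLike.congr_fun (C₂.t_comp hco₂ hb hb' hu) _
  rw [e1, C₂.t_step hco₂ hb hu hbu, map_map, C₂.t_step hco₂ hb' hu hb'u, map_map]
  have e3 : σ' a' ha' v = C₁.t hco₁ ha ha' (σ' a ha v) :=
    (sigma_t C₁ hco₁ σ' hσ' ha ha' v).symm
  rw [e3]
  exact (DFunLike.congr_fun (C₁.lemC hco₁ ha ha' (hab.trans hbu) (hab'.trans hb'u))
    (σ' a ha v)).symm

include hσ' hco₁ hco₂ in
theorem walk : ∀ {b d} (p : Pth C₂.J b d), (∀ y ∈ p.pts, ∃ w ∈ C₁.J, w ≤ y) →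
    ∀ {a γ} (ha : a ∈ C₁.J) (hγ : γ ∈ C₁.J) (hab : a ≤ b) (hγd : γ ≤ d)
      (hb : b ∈ C₂.J) (hd : d ∈ C₂.J) (v : L₁),
    C₂.t hco₂ hb hd (M.map hab (σ' a ha v)) = M.map hγd (σ' γ hγ v) := by
  intro b d p
  induction p with
  | nil e he =>
    intro _ a γ ha hγ hab hγd hb hd v
    exact pairEq_U C₁ C₂ hco₁ hco₂ σ' hσ' he ha hγ hb hd (le_refl e) (le_refl e) hab hγd v
  | @cons b b'' e hbJ hbb' p ih =>
    intro hpart a γ ha hγ hab hγd hb hd v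
    have hb''J : b'' ∈ C₂.J := p.headMem
    obtain ⟨a'', ha''J, ha''b''⟩ := hpart b'' (List.mem_cons_of_mem _ p.head_mem_pts)
    have hstep : C₂.t hco₂ hb hb''J (M.map hab (σ' a ha v)) =
        M.map ha''b'' (σ' a'' ha''J v) := by
      rcases hbb' with h | h
      · exact pairEq_U C₁ C₂ hco₁ hco₂ σ' hσ' hb''J ha ha''J hb hb''J h (le_refl b'')
          hab ha''b'' v
      · exact pairEq_U C₁ C₂ hco₁ hco₂ σ' hσ' hb ha ha''J hb hb''J (le_refl b) h
          hab ha''b'' v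
    have e1 : C₂.t hco₂ hb hd (M.map hab (σ' a ha v)) =
        C₂.t hco₂ hb''J hd (C₂.t hco₂ hb hb''J (M.map hab (σ' a ha v))) :=
      (DFunLike.congr_fun (C₂.t_comp hco₂ hb hb''J hd) _).symm
    rw [e1, hstep]
    exact ih (fun y hy => hpart y (List.mem_cons_of_mem _ hy)) ha''J hγ ha''b'' hγd hb''J hd v

end Cross

/-! ### The main cross-pair equality -/

section Main

variable {M : PersistenceModule F (ℝ × ℝ)}
variable (C₁ C₂ : Ctx F M)
variable (hdj : ∀ x : ℝ × ℝ, x ∈ C₁.J → x ∈ C₂.J → False)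
variable (hco₁ : ∀ x y : ℝ × ℝ, x ∈ C₁.J → y ∈ C₁.J → Nonempty (Pth C₁.J x y))
variable (hco₂ : ∀ x y : ℝ × ℝ, x ∈ C₂.J → y ∈ C₂.J → Nonempty (Pth C₂.J x y))
variable {L₁ : Type} [AddCommGroup L₁] [Module F L₁]
variable (σ' : ∀ x : ℝ × ℝ, x ∈ C₁.J → (L₁ →ₗ[F] M.V x))
variable (hσ' : ∀ x y (hx : x ∈ C₁.J) (hy : y ∈ C₁.J) (h : x ≤ y),
    (M.map h).comp (σ' x hx) = σ' y hy)

theorem hcA : ∀ x y : ℝ × ℝ, x ≤ y ↔ Prod.fst x ≤ Prod.fst y ∧ Prod.snd x ≤ Prod.snd y :=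
  fun _ _ => Prod.le_def
theorem hcB : ∀ x y : ℝ × ℝ, x ≤ y ↔ Prod.snd x ≤ Prod.snd y ∧ Prod.fst x ≤ Prod.fst y :=
  fun x y => by rw [Prod.le_def, and_comm]

include hdj hco₁ hco₂ hσ' in
theorem crossPairEq {a a' b b' : ℝ × ℝ} (ha : a ∈ C₁.J) (ha' : a' ∈ C₁.J)
    (hb : b ∈ C₂.J) (hb' : b' ∈ C₂.J) (hab : a ≤ b) (hab' : a' ≤ b') (v : L₁) :
    C₂.t hco₂ hb hb' (M.map hab (σ' a ha v)) = M.map hab' (σ' a' ha' v) := by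
  by_cases hab'2 : a ≤ b'
  · -- easy case (i)
    have E1 := pairEq_L C₁ C₂ hco₁ hco₂ σ' hσ' ha ha ha hb hb' (le_refl a) (le_refl a)
      hab hab'2 v
    have E2 := pairEq_U C₁ C₂ hco₁ hco₂ σ' hσ' hb' ha ha' hb' hb' (le_refl b') (le_refl b')
      hab'2 hab' v
    rw [C₂.t_refl hco₂ hb' hb'] at E2
    simp only [LinearMap.id_coe, id_eq] at E2
    exact E1.trans E2
  · by_cases ha'b : a' ≤ b
    · -- easy case (ii)
      have E1 := pairEq_U C₁ C₂ hco₁ hco₂ σ' hσ' hb ha ha' hb hb (le_refl b) (le_refl b)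
        hab ha'b v
      rw [C₂.t_refl hco₂ hb hb] at E1
      simp only [LinearMap.id_coe, id_eq] at E1
      have E2 := pairEq_L C₁ C₂ hco₁ hco₂ σ' hσ' ha' ha' ha' hb hb' (le_refl a') (le_refl a')
        ha'b hab' v
      rw [E1]
      exact E2
    · -- hard case
      obtain ⟨W₀, -, hWbox₀⟩ := C₁.boxPath (hco₁ a a' ha ha').some
      obtain ⟨Z₀, -, hZbox₀⟩ := C₂.boxPath (hco₂ b b' hb hb').some
      by_cases hA : b'.1 < a.1
      · -- branch A : use coordinates (fst, snd)
        have hB : b.2 < a'.2 := by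
          by_contra hc
          have h1 : a'.1 ≤ b.1 :=
            le_trans (fst_mono hab') (le_trans hA.le (fst_mono hab))
          exact ha'b (Prod.le_def.2 ⟨h1, not_lt.1 hc⟩)
        obtain ⟨W, hWax, hWS⟩ := axisify Prod.fst Prod.snd hcA (fun u v => (u, v))
          (fun _ _ => rfl) (fun _ _ => rfl) C₁.conv W₀
        obtain ⟨Z, hZax, hZS⟩ := axisify Prod.fst Prod.snd hcA (fun u v => (u, v))
          (fun _ _ => rfl) (fun _ _ => rfl) C₂.conv Z₀
        have hWbox : ∀ x ∈ W.pts, x ≤ a ⊔ a' :=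
          hWS _ (convex_le _) (fun x hx => (hWbox₀ x hx).2)
        have hZbox : ∀ x ∈ Z.pts, b ⊓ b' ≤ x :=
          hZS _ (convex_ge _) (fun x hx => (hZbox₀ x hx).1)
        have hpart := partners Prod.fst Prod.snd hcA (fun u v => (u, v))
          (fun _ _ => rfl) (fun _ _ => rfl) C₁.conv C₂.conv hdj ha ha' hb hb' hab hab'
          hA hB hWax hWbox hZax hZbox
        exact walk C₁ C₂ hco₁ hco₂ σ' hσ' Z hpart ha ha' hab hab' hb hb' v
      · -- branch B : use coordinates (snd, fst)
        have hA2 : b'.2 < a.2 := by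
          have h1 : ¬ a.2 ≤ b'.2 := fun hc => hab'2 (Prod.le_def.2 ⟨not_lt.1 hA, hc⟩)
          exact not_le.1 h1
        have hB2 : b.1 < a'.1 := by
          by_contra hc
          have h1 : a'.2 ≤ b.2 :=
            le_trans (snd_mono hab') (le_trans hA2.le (snd_mono hab))
          exact ha'b (Prod.le_def.2 ⟨not_lt.1 hc, h1⟩)
        obtain ⟨W, hWax, hWS⟩ := axisify Prod.snd Prod.fst hcB (fun u v => (v, u))
          (fun _ _ => rfl) (fun _ _ => rfl) C₁.conv W₀
        obtain ⟨Z, hZax, hZS⟩ := axisify Prod.snd Prod.fst hcB (fun u v => (v, u))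
          (fun _ _ => rfl) (fun _ _ => rfl) C₂.conv Z₀
        have hWbox : ∀ x ∈ W.pts, x ≤ a ⊔ a' :=
          hWS _ (convex_le _) (fun x hx => (hWbox₀ x hx).2)
        have hZbox : ∀ x ∈ Z.pts, b ⊓ b' ≤ x :=
          hZS _ (convex_ge _) (fun x hx => (hZbox₀ x hx).1)
        have hpart := partners Prod.snd Prod.fst hcB (fun u v => (v, u))
          (fun _ _ => rfl) (fun _ _ => rfl) C₁.conv C₂.conv hdj ha ha' hb hb' hab hab'
          hA2 hB2 hWax hWbox hZax hZbox
        exact walk C₁ C₂ hco₁ hco₂ σ' hσ' Z hpart ha ha' hab hab' hb hb' v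

end Main

/-- Conversion from zigzags to paths. -/
def zigzagToPth {J : Set (ℝ × ℝ)} : ∀ {a b : ↥J}, Zigzag ↥J a b → Pth J ↑a ↑b
  | _, _, .single a => .nil ↑a a.2
  | a, _, .consLe h p => .cons ↑a a.2 (Or.inl (Subtype.coe_le_coe.2 h)) (zigzagToPth p)
  | a, _, .consGe h p => .cons ↑a a.2 (Or.inr (Subtype.coe_le_coe.2 h)) (zigzagToPth p)

end S8

open S8 in
/-- Let `J₁, J₂` be disjoint connected convex subposets of `(ℝ,≤)²` and
`M` a persistence module whose structure maps inside each `Jₖ` are isomorphisms.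
If some `a ∈ J₁`, `b ∈ J₂` satisfy `a ≤ b`, then there is a unique linear map
`φ : lim_{J₁} M → lim_{J₂} M` with `τ_b ∘ φ = M(a ≤ b) ∘ σ_a` for every comparable
pair `a ∈ J₁`, `b ∈ J₂`; in particular `φ` does not depend on the chosen pair. -/
theorem statement8 (F : Type) [Field F] (M : PersistenceModule F (ℝ × ℝ))
    (J₁ J₂ : Set (ℝ × ℝ)) (hdisj : Disjoint J₁ J₂)
    (hconv₁ : PosetConvex J₁) (hconn₁ : ZigzagConnected J₁)
    (hconv₂ : PosetConvex J₂) (hconn₂ : ZigzagConnected J₂)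
    (hiso₁ : ∀ (i j : ↥J₁) (h : i ≤ j), Function.Bijective ((M.restrict J₁).map h))
    (hiso₂ : ∀ (i j : ↥J₂) (h : i ≤ j), Function.Bijective ((M.restrict J₂).map h))
    (hex : ∃ (a : ↥J₁) (b : ↥J₂), (a : ℝ × ℝ) ≤ (b : ℝ × ℝ))
    (L₁ : Type) [AddCommGroup L₁] [Module F L₁] (σ : ∀ i : ↥J₁, L₁ →ₗ[F] M.V ↑i)
    (hσ : IsLimitCone (M.restrict J₁) L₁ σ)
    (L₂ : Type) [AddCommGroup L₂] [Module F L₂] (τ : ∀ i : ↥J₂, L₂ →ₗ[F] M.V ↑i)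
    (hτ : IsLimitCone (M.restrict J₂) L₂ τ) :
    ∃! φ : L₁ →ₗ[F] L₂, ∀ (a : ↥J₁) (b : ↥J₂) (hab : (a : ℝ × ℝ) ≤ (b : ℝ × ℝ)),
      (τ b).comp φ = (M.map hab).comp (σ a) := by
  classical
  -- contexts
  set C₁ : Ctx F M := ⟨J₁, hconv₁, fun {x y} hx hy h =>
    hiso₁ ⟨x, hx⟩ ⟨y, hy⟩ (Subtype.mk_le_mk.2 h)⟩ with hC₁
  set C₂ : Ctx F M := ⟨J₂, hconv₂, fun {x y} hx hy h =>
    hiso₂ ⟨x, hx⟩ ⟨y, hy⟩ (Subtype.mk_le_mk.2 h)⟩ with hC₂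
  have hdj : ∀ x : ℝ × ℝ, x ∈ C₁.J → x ∈ C₂.J → False :=
    fun x hx hy => Set.disjoint_left.1 hdisj hx hy
  have hco₁ : ∀ x y : ℝ × ℝ, x ∈ C₁.J → y ∈ C₁.J → Nonempty (Pth C₁.J x y) :=
    fun x y hx hy => ⟨zigzagToPth (hconn₁ ⟨x, hx⟩ ⟨y, hy⟩).some⟩
  have hco₂ : ∀ x y : ℝ × ℝ, x ∈ C₂.J → y ∈ C₂.J → Nonempty (Pth C₂.J x y) :=
    fun x y hx hy => ⟨zigzagToPth (hconn₂ ⟨x, hx⟩ ⟨y, hy⟩).some⟩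
  set σ' : ∀ x : ℝ × ℝ, x ∈ C₁.J → (L₁ →ₗ[F] M.V x) := fun x hx => σ ⟨x, hx⟩ with hσ'def
  have hσ' : ∀ x y (hx : x ∈ C₁.J) (hy : y ∈ C₁.J) (h : x ≤ y),
      (M.map h).comp (σ' x hx) = σ' y hy :=
    fun x y hx hy h => hσ.1 ⟨x, hx⟩ ⟨y, hy⟩ (Subtype.mk_le_mk.2 h)
  obtain ⟨a₀, b₀, hab₀⟩ := hex
  -- the cone over J₂ with apex L₁
  set u : ∀ i : ↥J₂, L₁ →ₗ[F] M.V ↑i :=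
    fun i => (C₂.t hco₂ b₀.2 i.2).comp ((M.map hab₀).comp (σ a₀)) with hu
  have hcone : ∀ (i j : ↥J₂) (h : i ≤ j), ((M.restrict J₂).map h).comp (u i) = u j := by
    intro i j h
    apply LinearMap.ext
    intro v
    have h' : (i : ℝ × ℝ) ≤ j := Subtype.coe_le_coe.2 h
    have e1 := DFunLike.congr_fun (C₂.t_comp hco₂ b₀.2 i.2 j.2) ((M.map hab₀) (σ a₀ v))
    have e2 : C₂.t hco₂ i.2 j.2 = M.map h' := C₂.t_step hco₂ i.2 j.2 h'
    show M.map h' (C₂.t hco₂ b₀.2 i.2 (M.map hab₀ (σ a₀ v))) =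
      C₂.t hco₂ b₀.2 j.2 (M.map hab₀ (σ a₀ v))
    rw [← e2]
    exact e1
  obtain ⟨φ, hφ, huniq⟩ := hτ.2 L₁ u hcone
  have hmain : ∀ (a : ↥J₁) (b : ↥J₂) (hab : (a : ℝ × ℝ) ≤ (b : ℝ × ℝ)),
      (τ b).comp φ = (M.map hab).comp (σ a) := by
    intro a b hab
    refine (hφ b).trans ?_
    apply LinearMap.ext
    intro v
    show C₂.t hco₂ b₀.2 b.2 (M.map hab₀ (σ a₀ v)) = M.map hab (σ a v)
    exact crossPairEq C₁ C₂ hdj hco₁ hco₂ σ' hσ' a₀.2 a.2 b₀.2 b.2 hab₀ hab v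
  refine ⟨φ, hmain, ?_⟩
  intro φ' hφ'
  apply huniq φ'
  -- uniqueness: propagate the defining property along paths in J₂
  have hbase : (τ b₀).comp φ' = u b₀ := by
    rw [hφ' a₀ b₀ hab₀]
    apply LinearMap.ext
    intro v
    show M.map hab₀ (σ a₀ v) = C₂.t hco₂ b₀.2 b₀.2 (M.map hab₀ (σ a₀ v))
    rw [C₂.t_refl hco₂ b₀.2 b₀.2]
    rfl
  have hprop : ∀ {x y : ℝ × ℝ} (p : Pth C₂.J x y) (hx : x ∈ J₂) (hy : y ∈ J₂),
      (τ ⟨x, hx⟩).comp φ' = u ⟨x, hx⟩ → (τ ⟨y, hy⟩).comp φ' = u ⟨y, hy⟩ := by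
    intro x y p
    induction p with
    | nil a ha => intro hx hy h; exact h
    | @cons a b c ha hab p ih =>
      intro hx hy h
      apply ih p.headMem hy
      have hbJ : b ∈ J₂ := p.headMem
      rcases hab with hle | hge
      · apply LinearMap.ext
        intro v
        have e1 := DFunLike.congr_fun (hτ.1 ⟨a, hx⟩ ⟨b, hbJ⟩ (Subtype.mk_le_mk.2 hle)) (φ' v)
        have e2 := DFunLike.congr_fun (hcone ⟨a, hx⟩ ⟨b, hbJ⟩ (Subtype.mk_le_mk.2 hle)) v
        have e3 := DFunLike.congr_fun h v
        simp only [LinearMap.comp_apply] at e1 e2 e3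
        show τ ⟨b, hbJ⟩ (φ' v) = u ⟨b, hbJ⟩ v
        exact e1.symm.trans
          ((congrArg ((M.restrict J₂).map (Subtype.mk_le_mk.2 hle)) e3).trans e2)
      · apply LinearMap.ext
        intro v
        have hinj : Function.Injective (M.map hge) := (C₂.iso hbJ hx hge).injective
        apply hinj
        have e1 := DFunLike.congr_fun (hτ.1 ⟨b, hbJ⟩ ⟨a, hx⟩ (Subtype.mk_le_mk.2 hge)) (φ' v)
        have e2 := DFunLike.congr_fun (hcone ⟨b, hbJ⟩ ⟨a, hx⟩ (Subtype.mk_le_mk.2 hge)) v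
        have e3 := DFunLike.congr_fun h v
        simp only [LinearMap.comp_apply] at e1 e2 e3
        show M.map hge (τ ⟨b, hbJ⟩ (φ' v)) = M.map hge (u ⟨b, hbJ⟩ v)
        calc M.map hge (τ ⟨b, hbJ⟩ (φ' v)) = τ ⟨a, hx⟩ (φ' v) := e1
          _ = u ⟨a, hx⟩ v := e3
          _ = M.map hge (u ⟨b, hbJ⟩ v) := e2.symm
  intro i
  exact hprop (hco₂ ↑b₀ ↑i b₀.2 i.2).some b₀.2 i.2 hbase
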